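/- arXiv:0912.3159 — 5 statements merged into one kernel-verified Lean document; each statement's English description precedes it below -/
import Mathlib

section
/- Let A be a k-algebra, let s : H_q⊗A → A⊗H_q be a good left transposition with associated algebra automorphism α (so s(D_1⊗a) = α(a)⊗D_1, s(D_2⊗a) = α^{-1}(a)⊗D_2), and let ς, δ_1, δ_2 : A → A be k-linear maps satisfying: ς bijective, δ_1∘δ_2 = δ_2∘δ_1, qς∘δ_i = δ_i∘ς (i = 1,2), and δ_1^l = δ_2^l = 0 if q ≠ 1 and q^l = 1, so that there is a left H_q-action ρ on A with σ·a = ς(a) and D_i·a = δ_i(a). Then (A,s) is a left H_q-braided module algebra via ρ if and only if: (5) ς is an algebra automorphism; (6) α∘δ_i = δ_i∘α for i = 1,2; (7) α∘ς = ς∘α; (8) δ_i(1) = 0 for i = 1,2; (9) δ_1(ab) = δ_1(a)ς(b) + α(a)δ_1(b) for all a,b ∈ A; and (10) δ_2(ab) = δ_2(a)b + ς(α^{-1}(a))δ_2(b) for all a,b ∈ A. -/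
open TensorProduct

noncomputable section
namespace Paper

variable {k : Type*} [Field k]

section Combinators

variable {M N P Q M' N' P' M'' : Type*}
  [AddCommMonoid M] [AddCommMonoid N] [AddCommMonoid P] [AddCommMonoid Q]
  [AddCommMonoid M'] [AddCommMonoid N'] [AddCommMonoid P'] [AddCommMonoid M'']
  [Module k M] [Module k N] [Module k P] [Module k Q]
  [Module k M'] [Module k N'] [Module k P'] [Module k M'']

/-- `(s ⊗ id) ∘ (id ⊗ s)` : braid a pair of factors past `P`. -/
def braidPast (f : N ⊗[k] P →ₗ[k] P ⊗[k] N') (g : M ⊗[k] P →ₗ[k] P ⊗[k] M') :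
    (M ⊗[k] N) ⊗[k] P →ₗ[k] P ⊗[k] (M' ⊗[k] N') :=
  (TensorProduct.assoc k P M' N').toLinearMap
    ∘ₗ g.rTensor N'
    ∘ₗ (TensorProduct.assoc k M P N').symm.toLinearMap
    ∘ₗ f.lTensor M
    ∘ₗ (TensorProduct.assoc k M N P).toLinearMap

def braidUnder (f : M ⊗[k] N →ₗ[k] N' ⊗[k] M') (g : M' ⊗[k] P →ₗ[k] P' ⊗[k] M'') :
    M ⊗[k] (N ⊗[k] P) →ₗ[k] (N' ⊗[k] P') ⊗[k] M'' :=
  (TensorProduct.assoc k N' P' M'').symm.toLinearMap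
    ∘ₗ g.lTensor N'
    ∘ₗ (TensorProduct.assoc k N' M' P).toLinearMap
    ∘ₗ f.rTensor P
    ∘ₗ (TensorProduct.assoc k M N P).symm.toLinearMap

def midMap (f : N ⊗[k] P →ₗ[k] P' ⊗[k] N') :
    (M ⊗[k] N) ⊗[k] (P ⊗[k] Q) →ₗ[k] (M ⊗[k] P') ⊗[k] (N' ⊗[k] Q) :=
  (TensorProduct.assoc k M P' (N' ⊗[k] Q)).symm.toLinearMap
    ∘ₗ ((TensorProduct.assoc k P' N' Q).toLinearMap.lTensor M)
    ∘ₗ ((f.rTensor Q).lTensor M)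
    ∘ₗ ((TensorProduct.assoc k N P Q).symm.toLinearMap.lTensor M)
    ∘ₗ (TensorProduct.assoc k M N (P ⊗[k] Q)).toLinearMap

end Combinators

section Hq

variable (k)
variable (H : Type*) [Ring H]

/-- Axiomatisation of the Hopf algebra `H_q`. -/
structure HqData [HopfAlgebra k H] (q : k) where
  D₁ : H
  D₂ : H
  σ : Hˣ
  D_comm : D₁ * D₂ = D₂ * D₁
  σD₁ : q • ((σ : H) * D₁) = D₁ * (σ : H)
  σD₂ : q • ((σ : H) * D₂) = D₂ * (σ : H)
  comul_D₁ : Coalgebra.comul (R := k) D₁ = D₁ ⊗ₜ[k] (σ : H) + 1 ⊗ₜ[k] D₁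
  comul_D₂ : Coalgebra.comul (R := k) D₂ = D₂ ⊗ₜ[k] (1 : H) + (σ : H) ⊗ₜ[k] D₂
  comul_σ : Coalgebra.comul (R := k) ((σ : H)) = (σ : H) ⊗ₜ[k] (σ : H)
  counit_D₁ : Coalgebra.counit (R := k) D₁ = 0
  counit_D₂ : Coalgebra.counit (R := k) D₂ = 0
  counit_σ : Coalgebra.counit (R := k) ((σ : H)) = 1
  basis_generic : (∀ l : ℕ, 2 ≤ l → ¬ IsPrimitiveRoot q l) →
      ∃ b : Module.Basis (ℤ × ℕ × ℕ) k H,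
        ∀ i j m, b (i, j, m) = ((σ ^ i : Hˣ) : H) * D₁ ^ j * D₂ ^ m
  basis_root : ∀ l : ℕ, 2 ≤ l → IsPrimitiveRoot q l →
      D₁ ^ l = 0 ∧ D₂ ^ l = 0 ∧
      ∃ b : Module.Basis (ℤ × Fin l × Fin l) k H,
        ∀ i j m, b (i, j, m) = ((σ ^ i : Hˣ) : H) * D₁ ^ (j : ℕ) * D₂ ^ (m : ℕ)

variable (A : Type*) [Ring A] [Algebra k A]

/-- A left transposition of a (standard, flip-braided) bialgebra `H` on an algebra `A`. -/
structure IsTransposition [HopfAlgebra k H] (s : H ⊗[k] A ≃ₗ[k] A ⊗[k] H) : Prop where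
  unit_H : ∀ a : A, s ((1 : H) ⊗ₜ[k] a) = a ⊗ₜ[k] (1 : H)
  mul_H : s.toLinearMap ∘ₗ (LinearMap.mul' k H).rTensor A
      = (LinearMap.mul' k H).lTensor A ∘ₗ braidPast s.toLinearMap s.toLinearMap
  counit_compat : (TensorProduct.rid k A).toLinearMap
        ∘ₗ (Coalgebra.counit (R := k) (A := H)).lTensor A ∘ₗ s.toLinearMap
      = (TensorProduct.lid k A).toLinearMap ∘ₗ (Coalgebra.counit (R := k) (A := H)).rTensor A
  comul_compat : (Coalgebra.comul (R := k) (A := H)).lTensor A ∘ₗ s.toLinearMap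
      = braidPast s.toLinearMap s.toLinearMap ∘ₗ (Coalgebra.comul (R := k) (A := H)).rTensor A
  unit_A : ∀ h : H, s (h ⊗ₜ[k] (1 : A)) = (1 : A) ⊗ₜ[k] h
  mul_A : s.toLinearMap ∘ₗ (LinearMap.mul' k A).lTensor H
      = (LinearMap.mul' k A).rTensor H ∘ₗ braidUnder s.toLinearMap s.toLinearMap
  braid_compat : braidPast s.toLinearMap s.toLinearMap
        ∘ₗ (TensorProduct.comm k H H).toLinearMap.rTensor A
      = (TensorProduct.comm k H H).toLinearMap.lTensor A
        ∘ₗ braidPast s.toLinearMap s.toLinearMap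

/-- The action `H ⊗ A → A` attached to an algebra morphism `H →ₐ Module.End k A`. -/
def actMap [HopfAlgebra k H] (ρ : H →ₐ[k] Module.End k A) : H ⊗[k] A →ₗ[k] A :=
  TensorProduct.lift ρ.toLinearMap

/-- `(A, s)` is a left `H`-braided module algebra via the action `ρ`
(braid of `H` = flip). -/
structure IsModuleAlgebra [HopfAlgebra k H] (s : H ⊗[k] A ≃ₗ[k] A ⊗[k] H)
    (ρ : H →ₐ[k] Module.End k A) : Prop where
  compat_s : s.toLinearMap ∘ₗ (actMap k H A ρ).lTensor H
        ∘ₗ (TensorProduct.assoc k H H A).toLinearMap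
      = (actMap k H A ρ).rTensor H
        ∘ₗ (TensorProduct.assoc k H A H).symm.toLinearMap
        ∘ₗ s.toLinearMap.lTensor H
        ∘ₗ (TensorProduct.assoc k H H A).toLinearMap
        ∘ₗ (TensorProduct.comm k H H).toLinearMap.rTensor A
  mul_act : ∀ (h : H) (a b : A), ρ h (a * b)
      = (LinearMap.mul' k A
          ∘ₗ TensorProduct.map (actMap k H A ρ) (actMap k H A ρ)
          ∘ₗ midMap s.toLinearMap)
        ((Coalgebra.comul (R := k) h) ⊗ₜ[k] (a ⊗ₜ[k] b))
  one_act : ∀ h : H, ρ h (1 : A) = Coalgebra.counit (R := k) h • (1 : A)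

/-- `s` is a *good* transposition. -/
def GoodTransposition {q : k} [HopfAlgebra k H] (hq : HqData k H q)
    (s : H ⊗[k] A ≃ₗ[k] A ⊗[k] H) : Prop :=
  ∀ a : A, braidPast s.toLinearMap s.toLinearMap ((hq.D₁ ⊗ₜ[k] hq.D₂) ⊗ₜ[k] a)
    = a ⊗ₜ[k] (hq.D₁ ⊗ₜ[k] hq.D₂)

end Hq


section Crossed

variable {G : Type*} [Group G] {V : Type*} [AddCommGroup V] [Module k V]

variable (G) in
/-- `f` is a normal 2-cocycle on `G` with values in `kˣ`. -/
structure IsCocycle (f : G → G → kˣ) : Prop where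
  one_left : ∀ g, f 1 g = 1
  one_right : ∀ g, f g 1 = 1
  cocycle : ∀ g h l, f g h * f (g * h) l = f g (h * l) * f h l

variable (A : Type*) [Ring A] [Algebra k A]

/-- Axiomatisation of the crossed product `S(V) #_f G`:  `A` is generated by a copy of `V`
(with commuting elements, generating a copy of the symmetric algebra) and elements `w g`,
and is free as a module over the symmetric part with basis `{w g}`. -/
structure CrossedProduct (ρV : Representation k G V) (f : G → G → kˣ) where
  ι : V →ₗ[k] A
  w : G → A
  w_one : w 1 = 1
  ι_comm : ∀ v v', ι v * ι v' = ι v' * ι v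
  w_ι : ∀ g v, w g * ι v = ι (ρV g v) * w g
  w_mul : ∀ g h, w g * w h = (f g h : k) • w (g * h)
  isBasis : ∀ {n : ℕ} (bV : Module.Basis (Fin n) k V),
      ∃ bA : Module.Basis ((Fin n → ℕ) × G) k A,
        ∀ d g, bA (d, g) = (List.ofFn fun i => ι (bV i) ^ d i).prod * w g

namespace CrossedProduct

variable {A} {ρV : Representation k G V} {f : G → G → kˣ}

/-- The product in `A` of the images of a list of elements of `V`. -/
def mon (cp : CrossedProduct A ρV f) (l : List V) : A := (l.map cp.ι).prod

/-- `v₁ ⋯ v_{j-1}` : the image of the prefix of a monomial. -/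
def pre (cp : CrossedProduct A ρV f) {m : ℕ} (v : Fin m → V) (j : Fin m) : A :=
  cp.mon ((List.ofFn v).take j)

/-- `v_{j+1} ⋯ v_m` : the image of the suffix of a monomial. -/
def suf (cp : CrossedProduct A ρV f) {m : ℕ} (v : Fin m → V) (j : Fin m) : A :=
  cp.mon ((List.ofFn v).drop (j + 1))

/-- The subalgebra `S(V)` of the crossed product. -/
def SV (cp : CrossedProduct A ρV f) : Subalgebra k A :=
  Algebra.adjoin k (Set.range cp.ι)

/-- The subalgebra `S(W)` of the crossed product, for a subspace `W ≤ V`. -/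
def SW (cp : CrossedProduct A ρV f) (W : Submodule k V) : Subalgebra k A :=
  Algebra.adjoin k (cp.ι '' (W : Set V))

end CrossedProduct

/-- A linear endomorphism of `V` is `k[G]`-linear if it commutes with the `G`-action. -/
def GLinear (ρV : Representation k G V) (φ : V →ₗ[k] V) : Prop :=
  ∀ g v, φ (ρV g v) = ρV g (φ v)

variable (G) in
/-- `χ : G → kˣ` is a group homomorphism. -/
def IsCharacter (χ : G → kˣ) : Prop := ∀ g h, χ (g * h) = χ g * χ h

section Defs

variable {H : Type*} [Ring H] [HopfAlgebra k H] {q : k}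
variable {ρV : Representation k G V} {f : G → G → kˣ}

/-- `s` is the (good) transposition of `H_q` on `A` associated with the automorphism `α`. -/
def AssocTransposition (hq : HqData k H q)
    (s : H ⊗[k] A ≃ₗ[k] A ⊗[k] H) (α : A ≃ₐ[k] A) : Prop :=
  IsTransposition k H A s ∧ GoodTransposition k H A hq s
    ∧ (∀ a : A, s (hq.D₁ ⊗ₜ[k] a) = α a ⊗ₜ[k] hq.D₁)
    ∧ (∀ a : A, s (hq.D₂ ⊗ₜ[k] a) = α.symm a ⊗ₜ[k] hq.D₂)

variable {A}

/-- `ς` is the endomorphism of `A` determined by `ς̂` and `χ_ς`. -/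
def SigmaDef (cp : CrossedProduct A ρV f) (ςhat : V →ₗ[k] V) (χς : G → kˣ)
    (ς : Module.End k A) : Prop :=
  ∀ (m : ℕ) (v : Fin m → V) (g : G),
    ς (cp.mon (List.ofFn v) * cp.w g)
      = (χς g : k) • (cp.mon (List.ofFn fun i => ςhat (v i)) * cp.w g)

/-- `δ₁` is determined by `δ̂₁`, `δ̄₁` via the `(α, ς)`-twisted Leibniz formula. -/
def Delta1Def (cp : CrossedProduct A ρV f) (α : A ≃ₐ[k] A) (ς : Module.End k A)
    (δhat : V →ₗ[k] A) (δbar : G → A) (δ : Module.End k A) : Prop :=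
  ∀ (m : ℕ) (v : Fin m → V) (g : G),
    δ (cp.mon (List.ofFn v) * cp.w g)
      = (∑ j : Fin m, α (cp.pre v j) * δhat (v j) * ς (cp.suf v j * cp.w g))
        + α (cp.mon (List.ofFn v)) * δbar g

/-- `δ₂` is determined by `δ̂₂`, `δ̄₂` via the `(ς ∘ α⁻¹, id)`-twisted Leibniz formula. -/
def Delta2Def (cp : CrossedProduct A ρV f) (α : A ≃ₐ[k] A) (ς : Module.End k A)
    (δhat : V →ₗ[k] A) (δbar : G → A) (δ : Module.End k A) : Prop :=
  ∀ (m : ℕ) (v : Fin m → V) (g : G),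
    δ (cp.mon (List.ofFn v) * cp.w g)
      = (∑ j : Fin m, ς (α.symm (cp.pre v j)) * δhat (v j) * (cp.suf v j * cp.w g))
        + ς (α.symm (cp.mon (List.ofFn v))) * δbar g

/-- There is an `H_q`-braided module algebra structure on `(A, s)` with the
prescribed values of the action on `V` and on the `w_g`. -/
def HasHqModuleStructure (hq : HqData k H q) (cp : CrossedProduct A ρV f)
    (s : H ⊗[k] A ≃ₗ[k] A ⊗[k] H) (ςhat : V →ₗ[k] V) (χς : G → kˣ)
    (δhat1 δhat2 : V →ₗ[k] A) (δbar1 δbar2 : G → A) : Prop :=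
  ∃ ρ : H →ₐ[k] Module.End k A, IsModuleAlgebra k H A s ρ
    ∧ (∀ v : V, ρ (hq.σ : H) (cp.ι v) = cp.ι (ςhat v))
    ∧ (∀ g : G, ρ (hq.σ : H) (cp.w g) = (χς g : k) • cp.w g)
    ∧ (∀ v : V, ρ hq.D₁ (cp.ι v) = δhat1 v)
    ∧ (∀ g : G, ρ hq.D₁ (cp.w g) = δbar1 g)
    ∧ (∀ v : V, ρ hq.D₂ (cp.ι v) = δhat2 v)
    ∧ (∀ g : G, ρ hq.D₂ (cp.w g) = δbar2 g)

end Defs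

end Crossed

end Paper
namespace Paper
namespace S6

open TensorProduct LinearMap

variable {k : Type*} [Field k] {H : Type*} [Ring H] [HopfAlgebra k H]
variable {A : Type*} [Ring A] [Algebra k A]

/-- `c ⊗ d ↦ S(x ⊗ c) ⊗ d`, reassociated. -/
def Psi (S : H ⊗[k] A →ₗ[k] A ⊗[k] H) (x : H) : A ⊗[k] H →ₗ[k] A ⊗[k] (H ⊗[k] H) :=
  (TensorProduct.assoc k A H H).toLinearMap ∘ₗ (S ∘ₗ TensorProduct.mk k H A x).rTensor H

@[simp] lemma Psi_tmul (S : H ⊗[k] A →ₗ[k] A ⊗[k] H) (x : H) (c : A) (d : H) :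
    Psi S x (c ⊗ₜ[k] d) = (TensorProduct.assoc k A H H) (S (x ⊗ₜ[k] c) ⊗ₜ[k] d) := rfl

lemma braidPast_eval (S : H ⊗[k] A →ₗ[k] A ⊗[k] H) (x y : H) (a : A) :
    braidPast (k := k) S S ((x ⊗ₜ[k] y) ⊗ₜ[k] a) = Psi S x (S (y ⊗ₜ[k] a)) := by
  have h : ∀ t : A ⊗[k] H,
      (TensorProduct.assoc k A H H).toLinearMap
        (S.rTensor H ((TensorProduct.assoc k H A H).symm.toLinearMap (x ⊗ₜ[k] t)))
        = Psi S x t := by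
    intro t
    induction t using TensorProduct.induction_on with
    | zero => simp only [tmul_zero, map_zero]
    | tmul c d =>
        simp only [Psi_tmul, LinearEquiv.coe_coe, assoc_symm_tmul, rTensor_tmul]
    | add u v hu hv =>
        rw [tmul_add, map_add, map_add, map_add, hu, hv, map_add]
  simp only [braidPast, coe_comp, Function.comp_apply, LinearEquiv.coe_coe, assoc_tmul,
    lTensor_tmul]
  exact h (S (y ⊗ₜ[k] a))

end S6
end Paper
namespace Paper
namespace S6

open TensorProduct LinearMap

set_option synthInstance.maxHeartbeats 1000000
set_option maxHeartbeats 1600000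

variable {k : Type*} [Field k] {H : Type*} [Ring H] [HopfAlgebra k H]
variable {A : Type*} [Ring A] [Algebra k A]

/-- `c ⊗ d ↦ (ρ x c) * (ρ d b)`. -/
def Phi (ρ : H →ₐ[k] Module.End k A) (x : H) (b : A) : A ⊗[k] H →ₗ[k] A :=
  LinearMap.mul' k A ∘ₗ
    TensorProduct.map (ρ x) (actMap k H A ρ ∘ₗ (TensorProduct.mk k H A).flip b)

@[simp] lemma Phi_tmul (ρ : H →ₐ[k] Module.End k A) (x : H) (b : A) (c : A) (d : H) :
    Phi ρ x b (c ⊗ₜ[k] d) = ρ x c * ρ d b := by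
  simp [Phi, actMap]

/-- The right-hand side of the measuring condition, as a linear map. -/
def Fm (S : H ⊗[k] A →ₗ[k] A ⊗[k] H) (ρ : H →ₐ[k] Module.End k A) :
    (H ⊗[k] H) ⊗[k] (A ⊗[k] A) →ₗ[k] A :=
  LinearMap.mul' k A
    ∘ₗ TensorProduct.map (actMap k H A ρ) (actMap k H A ρ)
    ∘ₗ midMap (k := k) S

lemma Fm_eval (S : H ⊗[k] A →ₗ[k] A ⊗[k] H) (ρ : H →ₐ[k] Module.End k A)
    (x y : H) (a b : A) :
    Fm S ρ ((x ⊗ₜ[k] y) ⊗ₜ[k] (a ⊗ₜ[k] b)) = Phi ρ x b (S (y ⊗ₜ[k] a)) := by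
  have h : ∀ t : A ⊗[k] H,
      (LinearMap.mul' k A) ((TensorProduct.map (actMap k H A ρ) (actMap k H A ρ))
        ((TensorProduct.assoc k H A (H ⊗[k] A)).symm.toLinearMap
          (((TensorProduct.assoc k A H A).toLinearMap.lTensor H) (x ⊗ₜ[k] (t ⊗ₜ[k] b)))))
        = Phi ρ x b t := by
    intro t
    induction t using TensorProduct.induction_on with
    | zero => simp only [zero_tmul, tmul_zero, map_zero]
    | tmul c d =>
        simp only [lTensor_tmul, LinearEquiv.coe_coe, assoc_tmul, assoc_symm_tmul,
          map_tmul, Phi_tmul, mul'_apply, actMap, lift.tmul, AlgHom.toLinearMap_apply,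
          coe_comp, Function.comp_apply, TensorProduct.mk_apply, LinearMap.flip_apply]
    | add u v hu hv =>
        rw [add_tmul, tmul_add, map_add, map_add, map_add, map_add, hu, hv, map_add]
  have h2 : midMap (k := k) S ((x ⊗ₜ[k] y) ⊗ₜ[k] (a ⊗ₜ[k] b))
      = ((TensorProduct.assoc k H A (H ⊗[k] A)).symm.toLinearMap
          (((TensorProduct.assoc k A H A).toLinearMap.lTensor H)
            (x ⊗ₜ[k] (S (y ⊗ₜ[k] a) ⊗ₜ[k] b)))) := by
    simp only [midMap, coe_comp, Function.comp_apply, LinearEquiv.coe_coe, assoc_tmul,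
      lTensor_tmul, assoc_symm_tmul, rTensor_tmul]
  simp only [Fm, coe_comp, Function.comp_apply, h2]
  exact h (S (y ⊗ₜ[k] a))

end S6
end Paper
namespace Paper
namespace S6
section

open TensorProduct LinearMap

set_option synthInstance.maxHeartbeats 1000000
set_option maxHeartbeats 1600000

variable {k : Type*} [Field k] {q : k} {H : Type*} [Ring H] [HopfAlgebra k H]
variable {A : Type*} [Ring A] [Algebra k A]

lemma exists_funcs (hq : HqData k H q) :
    ∃ φ₁ φ₂ : H →ₗ[k] k, φ₁ hq.D₁ = 1 ∧ φ₁ 1 = 0 ∧ φ₂ hq.D₂ = 1 ∧ φ₂ 1 = 0 := by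
  by_cases hgen : ∀ l : ℕ, 2 ≤ l → ¬ IsPrimitiveRoot q l
  · obtain ⟨b, hb⟩ := hq.basis_generic hgen
    have h1 : (1 : H) = b (0, 0, 0) := by simp [hb]
    have hD1 : hq.D₁ = b (0, 1, 0) := by simp [hb]
    have hD2 : hq.D₂ = b (0, 0, 1) := by simp [hb]
    refine ⟨b.coord (0, 1, 0), b.coord (0, 0, 1), ?_, ?_, ?_, ?_⟩ <;>
      simp [h1, hD1, hD2, Module.Basis.coord_apply, Module.Basis.repr_self, Finsupp.single_apply,
        Prod.ext_iff]
  · push_neg at hgen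
    obtain ⟨l, hl2, hl⟩ := hgen
    obtain ⟨-, -, b, hb⟩ := hq.basis_root l hl2 hl
    have h1 : (1 : H) = b (0, ⟨0, by omega⟩, ⟨0, by omega⟩) := by simp [hb]
    have hD1 : hq.D₁ = b (0, ⟨1, by omega⟩, ⟨0, by omega⟩) := by simp [hb]
    have hD2 : hq.D₂ = b (0, ⟨0, by omega⟩, ⟨1, by omega⟩) := by simp [hb]
    refine ⟨b.coord (0, ⟨1, by omega⟩, ⟨0, by omega⟩),
      b.coord (0, ⟨0, by omega⟩, ⟨1, by omega⟩), ?_, ?_, ?_, ?_⟩ <;>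
      simp [h1, hD1, hD2, Module.Basis.coord_apply, Module.Basis.repr_self, Finsupp.single_apply,
        Prod.ext_iff, Fin.ext_iff]

lemma mem_adjoin (hq : HqData k H q) (x : H) :
    x ∈ Algebra.adjoin k {(hq.σ : H), ((hq.σ⁻¹ : Hˣ) : H), hq.D₁, hq.D₂} := by
  set T := Algebra.adjoin k {(hq.σ : H), ((hq.σ⁻¹ : Hˣ) : H), hq.D₁, hq.D₂} with hT
  have hσ : (hq.σ : H) ∈ T := Algebra.subset_adjoin (by simp)
  have hσi : ((hq.σ⁻¹ : Hˣ) : H) ∈ T := Algebra.subset_adjoin (by simp)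
  have hD1 : hq.D₁ ∈ T := Algebra.subset_adjoin (by simp)
  have hD2 : hq.D₂ ∈ T := Algebra.subset_adjoin (by simp)
  have hσz : ∀ i : ℤ, ((hq.σ ^ i : Hˣ) : H) ∈ T := by
    intro i
    induction i using Int.induction_on with
    | zero => simpa using Subalgebra.one_mem T
    | succ n hn =>
        have : (hq.σ ^ ((n : ℤ) + 1) : Hˣ) = hq.σ ^ (n : ℤ) * hq.σ := by
          rw [zpow_add_one]
        rw [this, Units.val_mul]
        exact mul_mem hn hσ
    | pred n hn =>
        have : (hq.σ ^ (-(n : ℤ) - 1) : Hˣ) = hq.σ ^ (-(n : ℤ)) * hq.σ⁻¹ := by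
          rw [zpow_sub_one]
        rw [this, Units.val_mul]
        exact mul_mem hn hσi
  have hmono : ∀ (i : ℤ) (j m : ℕ),
      ((hq.σ ^ i : Hˣ) : H) * hq.D₁ ^ j * hq.D₂ ^ m ∈ T :=
    fun i j m => mul_mem (mul_mem (hσz i) (pow_mem hD1 j)) (pow_mem hD2 m)
  have hspan : ∀ (ι : Type) (b : Module.Basis ι k H),
      (∀ i, b i ∈ T) → x ∈ T := by
    intro ι b hbT
    have hx : x ∈ Submodule.span k (Set.range b) := by
      rw [b.span_eq]; trivial
    have hle : Submodule.span k (Set.range b) ≤ Subalgebra.toSubmodule T :=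
      Submodule.span_le.2 (by rintro - ⟨i, rfl⟩; exact hbT i)
    exact hle hx
  by_cases hgen : ∀ l : ℕ, 2 ≤ l → ¬ IsPrimitiveRoot q l
  · obtain ⟨b, hb⟩ := hq.basis_generic hgen
    exact hspan (ℤ × ℕ × ℕ) b (fun p => by obtain ⟨i, j, m⟩ := p; rw [hb]; exact hmono i j m)
  · push_neg at hgen
    obtain ⟨l, hl2, hl⟩ := hgen
    obtain ⟨-, -, b, hb⟩ := hq.basis_root l hl2 hl
    exact hspan (ℤ × Fin l × Fin l) b
      (fun p => by obtain ⟨i, j, m⟩ := p; rw [hb]; exact hmono i j m)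

lemma tmul_right_cancel (φ : H →ₗ[k] k) (z : H) (hz : φ z = 1) {x y : A}
    (h : x ⊗ₜ[k] z = y ⊗ₜ[k] z) : x = y := by
  have h2 := congrArg ((TensorProduct.rid k A).toLinearMap ∘ₗ (φ.lTensor A)) h
  simpa [hz] using h2

lemma s_mul_left {s : H ⊗[k] A ≃ₗ[k] A ⊗[k] H} (hs : IsTransposition k H A s)
    (x y : H) (a : A) :
    s ((x * y) ⊗ₜ[k] a)
      = (LinearMap.mul' k H).lTensor A (Psi s.toLinearMap x (s (y ⊗ₜ[k] a))) := by
  have h := LinearMap.congr_fun hs.mul_H ((x ⊗ₜ[k] y) ⊗ₜ[k] a)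
  simpa [braidPast_eval, mul'_apply] using h

end
end S6
end Paper
namespace Paper
namespace S6
section

open TensorProduct LinearMap

set_option synthInstance.maxHeartbeats 1000000
set_option maxHeartbeats 1600000

variable {k : Type*} [Field k] {q : k} {H : Type*} [Ring H] [HopfAlgebra k H]
variable {A : Type*} [Ring A] [Algebra k A]
variable (hq : HqData k H q) {s : H ⊗[k] A ≃ₗ[k] A ⊗[k] H}

lemma s_sigma (hs : IsTransposition k H A s) (α : A ≃ₐ[k] A)
    (hα₁ : ∀ a : A, s (hq.D₁ ⊗ₜ[k] a) = α a ⊗ₜ[k] hq.D₁)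
    (φ₁ : H →ₗ[k] k) (hφD : φ₁ hq.D₁ = 1) (hφ1 : φ₁ 1 = 0) (a : A) :
    s ((hq.σ : H) ⊗ₜ[k] a) = a ⊗ₜ[k] (hq.σ : H) := by
  set S := s.toLinearMap with hS
  have hSa : ∀ z : H ⊗[k] A, S z = s z := fun z => rfl
  have hcc := LinearMap.congr_fun hs.comul_compat (hq.D₁ ⊗ₜ[k] a)
  rw [coe_comp, Function.comp_apply, coe_comp, Function.comp_apply] at hcc
  rw [hSa, hα₁, rTensor_tmul, hq.comul_D₁, lTensor_tmul, hq.comul_D₁] at hcc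
  rw [add_tmul, map_add, braidPast_eval, braidPast_eval] at hcc
  simp only [LinearEquiv.coe_coe] at hcc
  rw [hα₁ a] at hcc
  have hpsi1 : Psi S 1 (α a ⊗ₜ[k] hq.D₁) = α a ⊗ₜ[k] ((1 : H) ⊗ₜ[k] hq.D₁) := by
    rw [Psi_tmul, hSa, hs.unit_H]
    simp
  rw [hpsi1, tmul_add] at hcc
  have heq : Psi S hq.D₁ (S ((hq.σ : H) ⊗ₜ[k] a))
      = α a ⊗ₜ[k] (hq.D₁ ⊗ₜ[k] (hq.σ : H)) := by
    have := hcc.symm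
    rwa [add_left_inj] at this
  set χ : A ⊗[k] (H ⊗[k] H) →ₗ[k] A ⊗[k] H :=
    LinearMap.lTensor A ((TensorProduct.lid k H).toLinearMap ∘ₗ φ₁.rTensor H) with hχ
  have hχt : ∀ (c : A) (d e : H), χ (c ⊗ₜ[k] (d ⊗ₜ[k] e)) = φ₁ d • (c ⊗ₜ[k] e) := by
    intro c d e
    simp [hχ, TensorProduct.smul_tmul]
  have key : ∀ t : A ⊗[k] H, χ (Psi S hq.D₁ t)
      = ((α : A →ₗ[k] A).rTensor H) t := by
    intro t
    induction t using TensorProduct.induction_on with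
    | zero => simp
    | tmul c d =>
        rw [Psi_tmul, hSa, hα₁, assoc_tmul, hχt, hφD, one_smul, rTensor_tmul]
        rfl
    | add u v hu hv => simp only [map_add, hu, hv]
  have h2 : ((α : A →ₗ[k] A).rTensor H) (S ((hq.σ : H) ⊗ₜ[k] a))
      = α a ⊗ₜ[k] (hq.σ : H) := by
    rw [← key, heq, hχt, hφD, one_smul]
  have h3 : ∀ t : A ⊗[k] H,
      ((α.symm : A →ₗ[k] A).rTensor H) (((α : A →ₗ[k] A).rTensor H) t) = t := by
    intro t
    induction t using TensorProduct.induction_on with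
    | zero => simp
    | tmul c d => simp
    | add u v hu hv => simp only [map_add, hu, hv]
  have h4 := congrArg ((α.symm : A →ₗ[k] A).rTensor H) h2
  rw [h3] at h4
  have hfin : s ((hq.σ : H) ⊗ₜ[k] a)
      = ((α.symm : A →ₗ[k] A).rTensor H) (α a ⊗ₜ[k] (hq.σ : H)) := h4
  rw [hfin, rTensor_tmul]
  simp

lemma s_sigma_inv (hs : IsTransposition k H A s)
    (hσ : ∀ a : A, s ((hq.σ : H) ⊗ₜ[k] a) = a ⊗ₜ[k] (hq.σ : H)) (a : A) :
    s (((hq.σ⁻¹ : Hˣ) : H) ⊗ₜ[k] a) = a ⊗ₜ[k] ((hq.σ⁻¹ : Hˣ) : H) := by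
  set S := s.toLinearMap with hS
  have hmul := s_mul_left hs (hq.σ : H) ((hq.σ⁻¹ : Hˣ) : H) a
  rw [Units.mul_inv, hs.unit_H] at hmul
  have key : ∀ t : A ⊗[k] H,
      (LinearMap.mul' k H).lTensor A (Psi S (hq.σ : H) t)
        = LinearMap.lTensor A (LinearMap.mulLeft k ((hq.σ : H))) t := by
    intro t
    induction t using TensorProduct.induction_on with
    | zero => simp
    | tmul c d =>
        rw [Psi_tmul]
        show (LinearMap.mul' k H).lTensor A
          ((TensorProduct.assoc k A H H) (s ((hq.σ : H) ⊗ₜ[k] c) ⊗ₜ[k] d)) = _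
        rw [hσ, assoc_tmul, lTensor_tmul, lTensor_tmul, mul'_apply, mulLeft_apply]
    | add u v hu hv => simp only [map_add, hu, hv]
  rw [key] at hmul
  have h3 : ∀ t : A ⊗[k] H,
      LinearMap.lTensor A (LinearMap.mulLeft k (((hq.σ⁻¹ : Hˣ) : H)))
        (LinearMap.lTensor A (LinearMap.mulLeft k ((hq.σ : H))) t) = t := by
    intro t
    induction t using TensorProduct.induction_on with
    | zero => simp
    | tmul c d =>
        rw [lTensor_tmul, lTensor_tmul, mulLeft_apply, mulLeft_apply, ← mul_assoc,
          Units.inv_mul, one_mul]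
    | add u v hu hv => simp only [map_add, hu, hv]
  have := congrArg
    (LinearMap.lTensor A (LinearMap.mulLeft k (((hq.σ⁻¹ : Hˣ) : H)))) hmul
  rw [h3] at this
  have hfin : s (((hq.σ⁻¹ : Hˣ) : H) ⊗ₜ[k] a)
      = (LinearMap.lTensor A (LinearMap.mulLeft k (((hq.σ⁻¹ : Hˣ) : H)))) (a ⊗ₜ[k] 1) :=
    this.symm
  rw [lTensor_tmul, mulLeft_apply, mul_one] at hfin
  exact hfin

end
end S6
end Paper
namespace Paper
namespace S6
section

open TensorProduct LinearMap

set_option synthInstance.maxHeartbeats 1000000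
set_option maxHeartbeats 1600000

variable {k : Type*} [Field k] {q : k} {H : Type*} [Ring H] [HopfAlgebra k H]
variable {A : Type*} [Ring A] [Algebra k A]
variable (hq : HqData k H q) {s : H ⊗[k] A ≃ₗ[k] A ⊗[k] H}

/-- `s` commutes with the endomorphism `φ` of `A` over `h`. -/
def Comm (s : H ⊗[k] A ≃ₗ[k] A ⊗[k] H) (φ : Module.End k A) (h : H) : Prop :=
  ∀ a : A, s (h ⊗ₜ[k] φ a) = (φ.rTensor H) (s (h ⊗ₜ[k] a))

lemma comm_mul (hs : IsTransposition k H A s) (φ : Module.End k A) {g h : H}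
    (hg : Comm s φ g) (hh : Comm s φ h) : Comm s φ (g * h) := by
  intro a
  rw [s_mul_left hs, s_mul_left hs, hh a]
  have inner : ∀ (d : H) (t' : A ⊗[k] H),
      (LinearMap.mul' k H).lTensor A
          ((TensorProduct.assoc k A H H) ((φ.rTensor H t') ⊗ₜ[k] d))
        = φ.rTensor H ((LinearMap.mul' k H).lTensor A
            ((TensorProduct.assoc k A H H) (t' ⊗ₜ[k] d))) := by
    intro d t'
    induction t' using TensorProduct.induction_on with
    | zero => simp
    | tmul c e => simp
    | add u v hu hv => simp only [map_add, add_tmul, hu, hv]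
  have key : ∀ t : A ⊗[k] H,
      (LinearMap.mul' k H).lTensor A (Psi s.toLinearMap g (φ.rTensor H t))
        = φ.rTensor H ((LinearMap.mul' k H).lTensor A (Psi s.toLinearMap g t)) := by
    intro t
    induction t using TensorProduct.induction_on with
    | zero => simp
    | tmul c d =>
        rw [rTensor_tmul, Psi_tmul, Psi_tmul]
        have hgc : s.toLinearMap (g ⊗ₜ[k] φ c) = φ.rTensor H (s.toLinearMap (g ⊗ₜ[k] c)) :=
          hg c
        rw [hgc]
        exact inner d (s.toLinearMap (g ⊗ₜ[k] c))
    | add u v hu hv => simp only [map_add, hu, hv]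
  exact key (s (h ⊗ₜ[k] a))

lemma comm_gen (hs : IsTransposition k H A s)
    (hσs : ∀ a : A, s ((hq.σ : H) ⊗ₜ[k] a) = a ⊗ₜ[k] (hq.σ : H))
    (hσis : ∀ a : A, s (((hq.σ⁻¹ : Hˣ) : H) ⊗ₜ[k] a) = a ⊗ₜ[k] ((hq.σ⁻¹ : Hˣ) : H))
    (α : A ≃ₐ[k] A)
    (hα₁ : ∀ a : A, s (hq.D₁ ⊗ₜ[k] a) = α a ⊗ₜ[k] hq.D₁)
    (hα₂ : ∀ a : A, s (hq.D₂ ⊗ₜ[k] a) = α.symm a ⊗ₜ[k] hq.D₂)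
    (φ : Module.End k A) (hφα : ∀ a : A, α (φ a) = φ (α a)) :
    ∀ h : H, Comm s φ h := by
  have hφαs : ∀ a : A, α.symm (φ a) = φ (α.symm a) := by
    intro a
    have := hφα (α.symm a)
    rw [AlgEquiv.apply_symm_apply] at this
    rw [← this, AlgEquiv.symm_apply_apply]
  intro h
  refine Algebra.adjoin_induction ?_ ?_ ?_ ?_ (mem_adjoin hq h)
  · intro x hx
    simp only [Set.mem_insert_iff, Set.mem_singleton_iff] at hx
    rcases hx with rfl | rfl | rfl | rfl
    · intro a; rw [hσs, hσs, rTensor_tmul]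
    · intro a; rw [hσis, hσis, rTensor_tmul]
    · intro a; rw [hα₁, hα₁, rTensor_tmul, hφα]
    · intro a; rw [hα₂, hα₂, rTensor_tmul, hφαs]
  · intro r a
    rw [Algebra.algebraMap_eq_smul_one, ← smul_tmul', ← smul_tmul', map_smul, map_smul,
      hs.unit_H, hs.unit_H, map_smul, rTensor_tmul]
  · intro x y _ _ hx hy a
    rw [add_tmul, add_tmul, map_add, map_add, hx a, hy a, map_add]
  · intro x y _ _ hx hy
    exact comm_mul hs φ hx hy

lemma comm_rho (hs : IsTransposition k H A s) (ρ : H →ₐ[k] Module.End k A)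
    (ς ςinv δ₁ δ₂ : Module.End k A)
    (hρσ : ρ (hq.σ : H) = ς) (hρσi : ρ ((hq.σ⁻¹ : Hˣ) : H) = ςinv)
    (hρ₁ : ρ hq.D₁ = δ₁) (hρ₂ : ρ hq.D₂ = δ₂)
    (hς : ∀ h, Comm s ς h) (hςi : ∀ h, Comm s ςinv h)
    (hδ₁ : ∀ h, Comm s δ₁ h) (hδ₂ : ∀ h, Comm s δ₂ h) :
    ∀ h' h : H, Comm s (ρ h') h := by
  intro h' h
  refine Algebra.adjoin_induction ?_ ?_ ?_ ?_ (mem_adjoin hq h')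
  · intro x hx
    simp only [Set.mem_insert_iff, Set.mem_singleton_iff] at hx
    rcases hx with rfl | rfl | rfl | rfl
    · rw [hρσ]; exact hς h
    · rw [hρσi]; exact hςi h
    · rw [hρ₁]; exact hδ₁ h
    · rw [hρ₂]; exact hδ₂ h
  · intro r a
    rw [AlgHom.commutes]
    have h1 : (algebraMap k (Module.End k A) r) a = r • a := rfl
    have h2 : ((algebraMap k (Module.End k A) r)).rTensor H (s (h ⊗ₜ[k] a))
        = r • s (h ⊗ₜ[k] a) := by
      have : (algebraMap k (Module.End k A) r) = r • (LinearMap.id : Module.End k A) := by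
        ext x; simp [h1]
      rw [this, rTensor_smul, rTensor_id]
      rfl
    rw [h1, h2, tmul_smul, map_smul]
  · intro x y _ _ hx hy a
    rw [map_add, LinearMap.add_apply, tmul_add, map_add, hx a, hy a, rTensor_add,
      LinearMap.add_apply]
  · intro x y _ _ hx hy a
    rw [map_mul, Module.End.mul_apply, hx (ρ y a), hy a, rTensor_mul,
      Module.End.mul_apply]

end
end S6
end Paper
namespace Paper
namespace S6
section

open TensorProduct LinearMap

set_option synthInstance.maxHeartbeats 1000000
set_option maxHeartbeats 1600000

variable {k : Type*} [Field k] {q : k} {H : Type*} [Ring H] [HopfAlgebra k H]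
variable {A : Type*} [Ring A] [Algebra k A]
variable (hq : HqData k H q) {s : H ⊗[k] A ≃ₗ[k] A ⊗[k] H}

lemma comul_sigma_inv :
    Coalgebra.comul (R := k) ((hq.σ⁻¹ : Hˣ) : H)
      = ((hq.σ⁻¹ : Hˣ) : H) ⊗ₜ[k] ((hq.σ⁻¹ : Hˣ) : H) := by
  have h1 : Coalgebra.comul (R := k) (((hq.σ⁻¹ : Hˣ) : H) * (hq.σ : H)) = 1 := by
    rw [Units.inv_mul, Bialgebra.comul_one]
  rw [Bialgebra.comul_mul, hq.comul_σ] at h1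
  have h2 : ((hq.σ : H) ⊗ₜ[k] (hq.σ : H)) *
      (((hq.σ⁻¹ : Hˣ) : H) ⊗ₜ[k] ((hq.σ⁻¹ : Hˣ) : H)) = 1 := by
    rw [Algebra.TensorProduct.tmul_mul_tmul, Units.mul_inv, Algebra.TensorProduct.one_def]
  calc Coalgebra.comul (R := k) ((hq.σ⁻¹ : Hˣ) : H)
      = Coalgebra.comul (R := k) ((hq.σ⁻¹ : Hˣ) : H) *
          (((hq.σ : H) ⊗ₜ[k] (hq.σ : H)) *
            (((hq.σ⁻¹ : Hˣ) : H) ⊗ₜ[k] ((hq.σ⁻¹ : Hˣ) : H))) := by rw [h2, mul_one]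
    _ = (Coalgebra.comul (R := k) ((hq.σ⁻¹ : Hˣ) : H) *
          ((hq.σ : H) ⊗ₜ[k] (hq.σ : H))) *
            (((hq.σ⁻¹ : Hˣ) : H) ⊗ₜ[k] ((hq.σ⁻¹ : Hˣ) : H)) := by rw [mul_assoc]
    _ = ((hq.σ⁻¹ : Hˣ) : H) ⊗ₜ[k] ((hq.σ⁻¹ : Hˣ) : H) := by rw [h1, one_mul]

def Lam (ρ : H →ₐ[k] Module.End k A) (u : H) (b : A) : A ⊗[k] H →ₗ[k] A ⊗[k] A :=
  TensorProduct.map (ρ u) (actMap k H A ρ ∘ₗ (TensorProduct.mk k H A).flip b)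

@[simp] lemma Lam_tmul (ρ : H →ₐ[k] Module.End k A) (u : H) (b c : A) (d : H) :
    Lam ρ u b (c ⊗ₜ[k] d) = ρ u c ⊗ₜ[k] ρ d b := by
  simp [Lam, actMap]

variable (ρ : H →ₐ[k] Module.End k A)

lemma claimD (p u z : H) (b : A) (t' : A ⊗[k] H) :
    Phi ρ p (ρ z b) ((ρ u).rTensor H t')
      = Phi ρ (p * u) b
          ((LinearMap.mul' k H).lTensor A ((TensorProduct.assoc k A H H) (t' ⊗ₜ[k] z))) := by
  induction t' using TensorProduct.induction_on with
  | zero => simp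
  | tmul c d =>
      rw [rTensor_tmul, Phi_tmul, assoc_tmul, lTensor_tmul, mul'_apply, Phi_tmul,
        map_mul, map_mul, Module.End.mul_apply, Module.End.mul_apply]
  | add u' v' hu hv => simp only [map_add, add_tmul, hu, hv]

lemma claimC (hs : IsTransposition k H A s)
    (hComm : ∀ h' h : H, Comm s (ρ h') h)
    (p z u : H) (b : A) (t : A ⊗[k] H) :
    Fm s.toLinearMap ρ ((p ⊗ₜ[k] z) ⊗ₜ[k] (Lam ρ u b t))
      = Phi ρ (p * u) b ((LinearMap.mul' k H).lTensor A (Psi s.toLinearMap z t)) := by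
  induction t using TensorProduct.induction_on with
  | zero => simp
  | tmul c d =>
      rw [Lam_tmul, Fm_eval]
      have h1 : s.toLinearMap (z ⊗ₜ[k] (ρ u) c)
          = (ρ u).rTensor H (s.toLinearMap (z ⊗ₜ[k] c)) := hComm u z c
      rw [h1, claimD, Psi_tmul]
  | add u' v' hu hv => simp only [map_add, tmul_add, hu, hv]

lemma claimB (hs : IsTransposition k H A s)
    (hComm : ∀ h' h : H, Comm s (ρ h') h)
    (x : H ⊗[k] H) (u v : H) (a b : A) :
    Fm s.toLinearMap ρ (x ⊗ₜ[k] (Lam ρ u b (s (v ⊗ₜ[k] a))))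
      = Fm s.toLinearMap ρ ((x * (u ⊗ₜ[k] v)) ⊗ₜ[k] (a ⊗ₜ[k] b)) := by
  induction x using TensorProduct.induction_on with
  | zero => simp
  | tmul p z =>
      rw [claimC ρ hs hComm, Algebra.TensorProduct.tmul_mul_tmul, Fm_eval]
      simp only [LinearEquiv.coe_coe]
      rw [s_mul_left hs]
  | add u' v' hu hv => simp only [add_mul, add_tmul, map_add, hu, hv]

lemma claimA (g : H)
    (Mg : ∀ c d : A, ρ g (c * d)
      = Fm s.toLinearMap ρ ((Coalgebra.comul (R := k) g) ⊗ₜ[k] (c ⊗ₜ[k] d)))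
    (u : H) (b : A) (t : A ⊗[k] H) :
    ρ g (Phi ρ u b t)
      = Fm s.toLinearMap ρ ((Coalgebra.comul (R := k) g) ⊗ₜ[k] (Lam ρ u b t)) := by
  induction t using TensorProduct.induction_on with
  | zero => simp
  | tmul c d => rw [Phi_tmul, Lam_tmul, Mg]
  | add u' v' hu hv => simp only [map_add, tmul_add, hu, hv]

lemma stepAux (hs : IsTransposition k H A s)
    (hComm : ∀ h' h : H, Comm s (ρ h') h)
    (g : H)
    (Mg : ∀ c d : A, ρ g (c * d)
      = Fm s.toLinearMap ρ ((Coalgebra.comul (R := k) g) ⊗ₜ[k] (c ⊗ₜ[k] d)))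
    (y : H ⊗[k] H) (a b : A) :
    ρ g (Fm s.toLinearMap ρ (y ⊗ₜ[k] (a ⊗ₜ[k] b)))
      = Fm s.toLinearMap ρ ((Coalgebra.comul (R := k) g * y) ⊗ₜ[k] (a ⊗ₜ[k] b)) := by
  induction y using TensorProduct.induction_on with
  | zero => simp
  | tmul u v =>
      rw [Fm_eval]
      have h1 : s.toLinearMap (v ⊗ₜ[k] a) = s (v ⊗ₜ[k] a) := rfl
      rw [h1, claimA ρ g Mg, claimB ρ hs hComm]
  | add u' v' hu hv => simp only [mul_add, add_tmul, map_add, hu, hv]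

lemma step (hs : IsTransposition k H A s)
    (hComm : ∀ h' h : H, Comm s (ρ h') h)
    (g h : H)
    (Mg : ∀ c d : A, ρ g (c * d)
      = Fm s.toLinearMap ρ ((Coalgebra.comul (R := k) g) ⊗ₜ[k] (c ⊗ₜ[k] d)))
    (Mh : ∀ c d : A, ρ h (c * d)
      = Fm s.toLinearMap ρ ((Coalgebra.comul (R := k) h) ⊗ₜ[k] (c ⊗ₜ[k] d)))
    (a b : A) :
    ρ (g * h) (a * b)
      = Fm s.toLinearMap ρ ((Coalgebra.comul (R := k) (g * h)) ⊗ₜ[k] (a ⊗ₜ[k] b)) := by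
  rw [map_mul ρ g h, Module.End.mul_apply, Mh a b, stepAux ρ hs hComm g Mg,
    Bialgebra.comul_mul]

end
end S6
end Paper
set_option synthInstance.maxHeartbeats 1000000
set_option maxHeartbeats 3200000

open Paper in
/-- Characterisation of the `H_q`-braided module algebra structures on
`(A, s)` for a good transposition `s` with associated automorphism `α`. -/
theorem statement_6 {k : Type*} [Field k] {q : k} (hq0 : q ≠ 0)
    {H : Type*} [Ring H] [HopfAlgebra k H] (hq : HqData k H q)
    {A : Type*} [Ring A] [Algebra k A]
    (s : H ⊗[k] A ≃ₗ[k] A ⊗[k] H) (hs : IsTransposition k H A s)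
    (α : A ≃ₐ[k] A)
    (hα₁ : ∀ a : A, s (hq.D₁ ⊗ₜ[k] a) = α a ⊗ₜ[k] hq.D₁)
    (hα₂ : ∀ a : A, s (hq.D₂ ⊗ₜ[k] a) = α.symm a ⊗ₜ[k] hq.D₂)
    (ς δ₁ δ₂ : Module.End k A)
    (h1 : Function.Bijective ς)
    (h2 : δ₁ ∘ₗ δ₂ = δ₂ ∘ₗ δ₁)
    (h3₁ : q • (ς ∘ₗ δ₁) = δ₁ ∘ₗ ς) (h3₂ : q • (ς ∘ₗ δ₂) = δ₂ ∘ₗ ς)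
    (h4 : ∀ l : ℕ, 2 ≤ l → IsPrimitiveRoot q l → δ₁ ^ l = 0 ∧ δ₂ ^ l = 0)
    (ρ : H →ₐ[k] Module.End k A)
    (hρσ : ∀ a : A, ρ (hq.σ : H) a = ς a)
    (hρ₁ : ∀ a : A, ρ hq.D₁ a = δ₁ a)
    (hρ₂ : ∀ a : A, ρ hq.D₂ a = δ₂ a) :
    IsModuleAlgebra k H A s ρ
    ↔ ((Function.Bijective ς ∧ ς 1 = 1 ∧ ∀ a b : A, ς (a * b) = ς a * ς b)
        ∧ (∀ a : A, α (δ₁ a) = δ₁ (α a))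
        ∧ (∀ a : A, α (δ₂ a) = δ₂ (α a))
        ∧ (∀ a : A, α (ς a) = ς (α a))
        ∧ (δ₁ 1 = 0 ∧ δ₂ 1 = 0)
        ∧ (∀ a b : A, δ₁ (a * b) = δ₁ a * ς b + α a * δ₁ b)
        ∧ (∀ a b : A, δ₂ (a * b) = δ₂ a * b + ς (α.symm a) * δ₂ b)) := by
  classical
  open TensorProduct LinearMap in
  obtain ⟨φ₁, φ₂, hφ₁D, hφ₁1, hφ₂D, hφ₂1⟩ := S6.exists_funcs hq
  have hσs : ∀ a : A, s ((hq.σ : H) ⊗ₜ[k] a) = a ⊗ₜ[k] (hq.σ : H) :=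
    S6.s_sigma hq hs α hα₁ φ₁ hφ₁D hφ₁1
  have hσis : ∀ a : A, s (((hq.σ⁻¹ : Hˣ) : H) ⊗ₜ[k] a) = a ⊗ₜ[k] ((hq.σ⁻¹ : Hˣ) : H) :=
    S6.s_sigma_inv hq hs hσs
  have hρσE : ρ (hq.σ : H) = ς := LinearMap.ext hρσ
  have hρ₁E : ρ hq.D₁ = δ₁ := LinearMap.ext hρ₁
  have hρ₂E : ρ hq.D₂ = δ₂ := LinearMap.ext hρ₂
  set ςe : A ≃ₗ[k] A := LinearEquiv.ofBijective ς h1 with hςe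
  have hςea : ∀ a : A, ςe a = ς a := fun a => rfl
  have hςς : ∀ x : A, ς (ςe.symm x) = x := fun x => ςe.apply_symm_apply x
  have hinv : ∀ x : A, ρ ((hq.σ⁻¹ : Hˣ) : H) (ς x) = x := by
    intro x
    have h12 : ρ ((hq.σ⁻¹ : Hˣ) : H) * ρ (hq.σ : H) = 1 := by
      rw [← map_mul, Units.inv_mul, map_one]
    have h13 := congrArg (fun f : Module.End k A => f x) h12
    simpa [Module.End.mul_apply, hρσ x] using h13
  have hρσiE : ρ ((hq.σ⁻¹ : Hˣ) : H) = (ςe.symm : A →ₗ[k] A) := by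
    ext a
    calc ρ ((hq.σ⁻¹ : Hˣ) : H) a
        = ρ ((hq.σ⁻¹ : Hˣ) : H) (ς (ςe.symm a)) := by rw [hςς]
      _ = (ςe.symm : A →ₗ[k] A) a := hinv _
  have hρσia : ∀ a : A, ρ ((hq.σ⁻¹ : Hˣ) : H) a = ςe.symm a := fun a => by
    rw [hρσiE]; rfl
  have hact : ∀ (h' : H) (a : A), actMap k H A ρ (h' ⊗ₜ[k] a) = ρ h' a := by
    intro h' a; simp [actMap]
  constructor
  · -- forward direction
    intro hma
    have mulact : ∀ (h : H) (a b : A), ρ h (a * b)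
        = S6.Fm s.toLinearMap ρ ((Coalgebra.comul (R := k) h) ⊗ₜ[k] (a ⊗ₜ[k] b)) :=
      fun h a b => hma.mul_act h a b
    have hcompat₁ : ∀ (h' : H) (a : A), α (ρ h' a) = ρ h' (α a) := by
      intro h' a
      have hc := LinearMap.congr_fun hma.compat_s ((hq.D₁ ⊗ₜ[k] h') ⊗ₜ[k] a)
      simp only [coe_comp, Function.comp_apply, LinearEquiv.coe_coe, assoc_tmul,
        lTensor_tmul, comm_tmul, rTensor_tmul, assoc_symm_tmul, hact, hα₁] at hc
      exact S6.tmul_right_cancel φ₁ hq.D₁ hφ₁D hc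
    have hcompat₂ : ∀ (h' : H) (a : A), α.symm (ρ h' a) = ρ h' (α.symm a) := by
      intro h' a
      have hc := LinearMap.congr_fun hma.compat_s ((hq.D₂ ⊗ₜ[k] h') ⊗ₜ[k] a)
      simp only [coe_comp, Function.comp_apply, LinearEquiv.coe_coe, assoc_tmul,
        lTensor_tmul, comm_tmul, rTensor_tmul, assoc_symm_tmul, hact, hα₂] at hc
      exact S6.tmul_right_cancel φ₂ hq.D₂ hφ₂D hc
    refine ⟨⟨h1, ?_, ?_⟩, ?_, ?_, ?_, ⟨?_, ?_⟩, ?_, ?_⟩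
    · have := hma.one_act (hq.σ : H)
      rwa [hρσ, hq.counit_σ, one_smul] at this
    · intro a b
      have h5 := mulact (hq.σ : H) a b
      rw [hρσ, hq.comul_σ, S6.Fm_eval] at h5
      simp only [LinearEquiv.coe_coe] at h5
      rw [hσs, S6.Phi_tmul, hρσ, hρσ] at h5
      exact h5
    · intro a
      have hd := hcompat₂ hq.D₁ (α a)
      rw [hρ₁, hρ₁, AlgEquiv.symm_apply_apply] at hd
      calc α (δ₁ a) = α (α.symm (δ₁ (α a))) := by rw [← hd]
        _ = δ₁ (α a) := α.apply_symm_apply _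
    · intro a
      have := hcompat₁ hq.D₂ a
      rwa [hρ₂, hρ₂] at this
    · intro a
      have := hcompat₁ (hq.σ : H) a
      rwa [hρσ, hρσ] at this
    · have := hma.one_act hq.D₁
      rwa [hρ₁, hq.counit_D₁, zero_smul] at this
    · have := hma.one_act hq.D₂
      rwa [hρ₂, hq.counit_D₂, zero_smul] at this
    · intro a b
      have h9 := mulact hq.D₁ a b
      rw [hρ₁, hq.comul_D₁, add_tmul, map_add, S6.Fm_eval, S6.Fm_eval] at h9
      simp only [LinearEquiv.coe_coe] at h9
      rw [hσs, hα₁, S6.Phi_tmul, S6.Phi_tmul, hρ₁, hρσ, hρ₁, map_one,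
        Module.End.one_apply] at h9
      exact h9
    · intro a b
      have h10 := mulact hq.D₂ a b
      rw [hρ₂, hq.comul_D₂, add_tmul, map_add, S6.Fm_eval, S6.Fm_eval] at h10
      simp only [LinearEquiv.coe_coe] at h10
      rw [hs.unit_H, hα₂, S6.Phi_tmul, S6.Phi_tmul, hρ₂, hρσ, hρ₂, map_one,
        Module.End.one_apply] at h10
      exact h10
  · -- backward direction
    rintro ⟨⟨-, hς1, hςm⟩, h6a, h6b, h7, ⟨h81, h82⟩, h9, h10⟩
    have hςinj := h1.1
    have hαςinv : ∀ a : A, α (ςe.symm a) = ςe.symm (α a) := by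
      intro a
      apply hςinj
      rw [hςς]
      have := h7 (ςe.symm a)
      rw [hςς] at this
      rw [← this]
    have hςinvm : ∀ a b : A, ςe.symm (a * b) = ςe.symm a * ςe.symm b := by
      intro a b
      apply hςinj
      rw [hςς, hςm, hςς, hςς]
    have hςinv1 : ςe.symm (1 : A) = 1 := by
      apply hςinj
      rw [hςς, hς1]
    have hCommς : ∀ h : H, S6.Comm s ς h :=
      S6.comm_gen hq hs hσs hσis α hα₁ hα₂ ς h7
    have hCommςi : ∀ h : H, S6.Comm s (ςe.symm : A →ₗ[k] A) h :=
      S6.comm_gen hq hs hσs hσis α hα₁ hα₂ _ hαςinv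
    have hCommδ₁ : ∀ h : H, S6.Comm s δ₁ h :=
      S6.comm_gen hq hs hσs hσis α hα₁ hα₂ δ₁ h6a
    have hCommδ₂ : ∀ h : H, S6.Comm s δ₂ h :=
      S6.comm_gen hq hs hσs hσis α hα₁ hα₂ δ₂ h6b
    have hCommAll : ∀ h' h : H, S6.Comm s (ρ h') h :=
      S6.comm_rho hq hs ρ ς (ςe.symm : A →ₗ[k] A) δ₁ δ₂ hρσE hρσiE hρ₁E hρ₂E
        hCommς hCommςi hCommδ₁ hCommδ₂
    have hM : ∀ (h : H) (a b : A), ρ h (a * b)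
        = S6.Fm s.toLinearMap ρ ((Coalgebra.comul (R := k) h) ⊗ₜ[k] (a ⊗ₜ[k] b)) := by
      intro h
      refine Algebra.adjoin_induction ?_ ?_ ?_ ?_ (S6.mem_adjoin hq h)
      · intro x hx
        simp only [Set.mem_insert_iff, Set.mem_singleton_iff] at hx
        rcases hx with rfl | rfl | rfl | rfl
        · intro a b
          rw [hρσ, hςm, hq.comul_σ, S6.Fm_eval]
          simp only [LinearEquiv.coe_coe]
          rw [hσs, S6.Phi_tmul, hρσ, hρσ]
        · intro a b
          rw [hρσia, hςinvm, S6.comul_sigma_inv hq, S6.Fm_eval]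
          simp only [LinearEquiv.coe_coe]
          rw [hσis, S6.Phi_tmul, hρσia, hρσia]
        · intro a b
          rw [hρ₁, h9, hq.comul_D₁, add_tmul, map_add, S6.Fm_eval, S6.Fm_eval]
          simp only [LinearEquiv.coe_coe]
          rw [hσs, hα₁, S6.Phi_tmul, S6.Phi_tmul, hρ₁, hρσ, hρ₁, map_one,
            Module.End.one_apply]
        · intro a b
          rw [hρ₂, h10, hq.comul_D₂, add_tmul, map_add, S6.Fm_eval, S6.Fm_eval]
          simp only [LinearEquiv.coe_coe]
          rw [hs.unit_H, hα₂, S6.Phi_tmul, S6.Phi_tmul, hρ₂, hρσ, hρ₂, map_one,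
            Module.End.one_apply]
      · intro r a b
        have hone : S6.Fm s.toLinearMap ρ ((1 : H ⊗[k] H) ⊗ₜ[k] (a ⊗ₜ[k] b)) = a * b := by
          rw [Algebra.TensorProduct.one_def, S6.Fm_eval]
          simp only [LinearEquiv.coe_coe]
          rw [hs.unit_H, S6.Phi_tmul, map_one, Module.End.one_apply, Module.End.one_apply]
        rw [AlgHom.commutes, Module.algebraMap_end_apply,
          Algebra.algebraMap_eq_smul_one (A := H), map_smul, Bialgebra.comul_one,
          ← smul_tmul', map_smul, hone]
      · intro x y _ _ hx hy a b
        rw [map_add, LinearMap.add_apply, map_add, add_tmul, map_add, hx a b, hy a b]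
      · intro x y _ _ hx hy a b
        exact S6.step ρ hs hCommAll x y hx hy a b
    have hO : ∀ h : H, ρ h (1 : A) = Coalgebra.counit (R := k) h • (1 : A) := by
      intro h
      refine Algebra.adjoin_induction ?_ ?_ ?_ ?_ (S6.mem_adjoin hq h)
      · intro x hx
        simp only [Set.mem_insert_iff, Set.mem_singleton_iff] at hx
        rcases hx with rfl | rfl | rfl | rfl
        · rw [hρσ, hς1, hq.counit_σ, one_smul]
        · have hcε : Coalgebra.counit (R := k) ((hq.σ⁻¹ : Hˣ) : H) = 1 := by
            have hcm := Bialgebra.counit_mul (R := k) ((hq.σ⁻¹ : Hˣ) : H) (hq.σ : H)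
            rw [Units.inv_mul, Bialgebra.counit_one, hq.counit_σ, mul_one] at hcm
            exact hcm.symm
          rw [hρσia, hςinv1, hcε, one_smul]
        · rw [hρ₁, h81, hq.counit_D₁, zero_smul]
        · rw [hρ₂, h82, hq.counit_D₂, zero_smul]
      · intro r
        rw [AlgHom.commutes, Module.algebraMap_end_apply,
          Algebra.algebraMap_eq_smul_one (A := H), map_smul, Bialgebra.counit_one,
          smul_assoc, one_smul]
      · intro x y _ _ hx hy
        rw [map_add, LinearMap.add_apply, hx, hy, map_add, add_smul]
      · intro x y _ _ hx hy
        rw [map_mul, Module.End.mul_apply, hy, map_smul, hx, smul_smul,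
          Bialgebra.counit_mul, mul_comm]
    refine ⟨?_, fun h a b => hM h a b, hO⟩
    -- compat_s
    apply TensorProduct.ext_threefold
    intro x y a
    have hrhs : ∀ (y : H) (t : A ⊗[k] H),
        (actMap k H A ρ).rTensor H ((TensorProduct.assoc k H A H).symm (y ⊗ₜ[k] t))
          = (ρ y).rTensor H t := by
      intro y t
      induction t using TensorProduct.induction_on with
      | zero => simp
      | tmul c d => rw [assoc_symm_tmul, rTensor_tmul, rTensor_tmul, hact]
      | add u v hu hv => simp only [tmul_add, map_add, hu, hv]
    simp only [coe_comp, Function.comp_apply, LinearEquiv.coe_coe, assoc_tmul,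
      lTensor_tmul, comm_tmul, rTensor_tmul, hact]
    rw [hrhs]
    exact hCommAll y x a
end
end

section
/- Let A = S(V)#_f G, let ς̂ : V → V be a k-linear map and let χ_ς : G → k^× be a map. The k-linear map ς : A → A defined by ς(v_1⋯v_m w_g) := ς̂(v_1)⋯ς̂(v_m)χ_ς(g)w_g is a k-algebra automorphism of A if and only if ς̂ is a bijective k[G]-linear map and χ_ς is a group homomorphism. -/
open TensorProduct

noncomputable section
namespace S8Aux
open Paper Paper.CrossedProduct

lemma prod_pow_single {M : Type*} [Monoid M] :
    ∀ {n : ℕ} (u : Fin n → M) (i : Fin n),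
      (List.ofFn fun j => u j ^ (Pi.single i 1 : Fin n → ℕ) j).prod = u i := by
  intro n
  induction n with
  | zero => exact fun u i => i.elim0
  | succ n ih =>
    intro u i
    rw [List.ofFn_succ]
    refine Fin.cases ?_ ?_ i
    · rw [List.prod_cons, Pi.single_eq_same, pow_one]
      have h1 : (List.ofFn fun j : Fin n =>
          u j.succ ^ (Pi.single (0 : Fin (n+1)) 1 : Fin (n+1) → ℕ) j.succ).prod = 1 := by
        apply List.prod_eq_one
        intro x hx
        rw [List.mem_ofFn] at hx
        obtain ⟨j, rfl⟩ := hx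
        simp [Pi.single_eq_of_ne (Fin.succ_ne_zero j)]
      rw [h1, mul_one]
    · intro i'
      rw [List.prod_cons, Pi.single_eq_of_ne (Fin.succ_ne_zero i').symm, pow_zero, one_mul]
      have h2 : (List.ofFn fun j : Fin n =>
            u j.succ ^ (Pi.single i'.succ 1 : Fin (n+1) → ℕ) j.succ)
          = List.ofFn fun j : Fin n => (u ∘ Fin.succ) j ^ (Pi.single i' 1 : Fin n → ℕ) j := by
        congr 1
        funext j
        congr 1
        simp [Pi.single_apply, Fin.succ_inj]
      rw [h2, ih]
      rfl

variable {k : Type*} [Field k] {G : Type*} [Group G] {V : Type*} [AddCommGroup V] [Module k V]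
  {A : Type*} [Ring A] [Algebra k A] {ρV : Representation k G V} {f : G → G → kˣ}
  (cp : CrossedProduct A ρV f)

lemma mon_nil : cp.mon ([] : List V) = 1 := rfl

lemma mon_cons (v : V) (l : List V) : cp.mon (v :: l) = cp.ι v * cp.mon l := by
  simp [CrossedProduct.mon]

lemma mon_append (l l' : List V) : cp.mon (l ++ l') = cp.mon l * cp.mon l' := by
  simp [CrossedProduct.mon]

lemma w_mon (g : G) (l : List V) :
    cp.w g * cp.mon l = cp.mon (l.map (ρV g)) * cp.w g := by
  induction l with
  | nil => simp [mon_nil]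
  | cons v l ih =>
    rw [List.map_cons, mon_cons, mon_cons, ← mul_assoc, cp.w_ι, mul_assoc, ih,
      ← mul_assoc]

lemma sig_list {ςhat : V →ₗ[k] V} {χς : G → kˣ} {ς : Module.End k A}
    (hςdef : SigmaDef cp ςhat χς ς) (l : List V) (g : G) :
    ς (cp.mon l * cp.w g) = (χς g : k) • (cp.mon (l.map ςhat) * cp.w g) := by
  have h := hςdef l.length l.get g
  rw [List.ofFn_get] at h
  rw [h]
  congr 2
  rw [show (List.ofFn fun i => ςhat (l.get i)) = List.map ςhat (List.ofFn l.get) by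
    rw [List.map_ofFn]; rfl, List.ofFn_get]

/-- The list `v₁^{d₁} ⋯ v_n^{d_n}` as a flat list. -/
def listOf {n : ℕ} (u : Fin n → V) (d : Fin n → ℕ) : List V :=
  (List.ofFn fun i => List.replicate (d i) (u i)).flatten

omit [AddCommGroup V] in
lemma map_listOf (φ : V → V) {n : ℕ} (u : Fin n → V) (d : Fin n → ℕ) :
    (listOf u d).map φ = listOf (φ ∘ u) d := by
  simp [listOf, List.map_flatten, List.map_ofFn, Function.comp_def, List.map_replicate]

lemma mon_listOf {n : ℕ} (u : Fin n → V) (d : Fin n → ℕ) :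
    cp.mon (listOf u d) = (List.ofFn fun i => cp.ι (u i) ^ d i).prod := by
  simp [CrossedProduct.mon, listOf, List.map_flatten, List.map_ofFn, List.prod_flatten,
    Function.comp_def, List.map_replicate, List.prod_replicate]

end S8Aux

open Paper in
/-- The map `ς(v₁⋯v_m w_g) = ς̂(v₁)⋯ς̂(v_m) χ_ς(g) w_g` is an algebra
automorphism of `A = S(V) #_f G` iff `ς̂` is bijective `k[G]`-linear and `χ_ς` is a character. -/
theorem statement_8 {k : Type*} [Field k]
    {G : Type*} [Group G] {V : Type*} [AddCommGroup V] [Module k V] [FiniteDimensional k V]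
    (ρV : Representation k G V) (f : G → G → kˣ) (hf : IsCocycle G f)
    {A : Type*} [Ring A] [Algebra k A] (cp : CrossedProduct A ρV f)
    (ςhat : V →ₗ[k] V) (χς : G → kˣ)
    (ς : Module.End k A) (hςdef : SigmaDef cp ςhat χς ς) :
    (Function.Bijective ς ∧ ς 1 = 1 ∧ ∀ a b : A, ς (a * b) = ς a * ς b)
    ↔ (Function.Bijective ςhat ∧ GLinear ρV ςhat ∧ IsCharacter G χς) := by
  classical
  set n := Module.finrank k V with hn
  set bV : Module.Basis (Fin n) k V := Module.finBasis k V with hbVdef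
  obtain ⟨bA, hbA⟩ := cp.isBasis bV
  have hmon : ∀ (d : Fin n → ℕ) (g : G), bA (d, g) = cp.mon (S8Aux.listOf (⇑bV) d) * cp.w g :=
    fun d g => by rw [hbA, ← S8Aux.mon_listOf]
  have hw0 : ∀ g : G, bA (fun _ => 0, g) = cp.w g := by
    intro g
    rw [hbA]
    simp
  have hwne : ∀ g : G, cp.w g ≠ 0 := fun g => hw0 g ▸ bA.ne_zero _
  have hscancel : ∀ (c : kˣ) (x y : A), (c : k) • x = (c : k) • y → x = y := by
    intro c x y h
    have h2 : ((c : k)⁻¹ * (c : k)) • x = ((c : k)⁻¹ * (c : k)) • y := by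
      rw [mul_smul, mul_smul, h]
    rwa [inv_mul_cancel₀ c.ne_zero, one_smul, one_smul] at h2
  have hsc : ∀ (c d : k) (x : A), x ≠ 0 → c • x = d • x → c = d := by
    intro c d x hx h
    by_contra hcd
    have h0 : (c - d) • x = 0 := by rw [sub_smul, h, sub_self]
    exact hx (by rw [← inv_smul_smul₀ (sub_ne_zero.mpr hcd) x, h0, smul_zero])
  have hsw : ∀ g : G, ς (cp.w g) = (χς g : k) • cp.w g := by
    intro g
    simpa [S8Aux.mon_nil] using S8Aux.sig_list cp hςdef [] g
  have hsι : ∀ v : V, ς (cp.ι v) = (χς 1 : k) • cp.ι (ςhat v) := by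
    intro v
    simpa [Paper.CrossedProduct.mon, cp.w_one] using S8Aux.sig_list cp hςdef [v] 1
  have hwc : ∀ (g : G) (x y : A), x * cp.w g = y * cp.w g → x = y := by
    intro g x y h
    have h2 : x * (cp.w g * cp.w g⁻¹) = y * (cp.w g * cp.w g⁻¹) := by
      rw [← mul_assoc, ← mul_assoc, h]
    rw [cp.w_mul, mul_inv_cancel, cp.w_one, mul_smul_comm, mul_smul_comm, mul_one, mul_one] at h2
    exact hscancel _ _ _ h2
  have hι1 : ∀ i : Fin n, cp.ι (bV i) = bA ((Pi.single i 1 : Fin n → ℕ), 1) := by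
    intro i
    rw [hbA, S8Aux.prod_pow_single, cp.w_one, mul_one]
  have hιinj : Function.Injective cp.ι := by
    have hcomp : Function.Injective fun i : Fin n => ((Pi.single i 1 : Fin n → ℕ), (1 : G)) := by
      intro i j hij
      have h1 : (Pi.single i 1 : Fin n → ℕ) = Pi.single j 1 := (Prod.ext_iff.mp hij).1
      by_contra hne
      have h2 := congrFun h1 i
      rw [Pi.single_eq_same, Pi.single_eq_of_ne hne] at h2
      exact one_ne_zero h2
    have hli : LinearIndependent k fun i : Fin n => cp.ι (bV i) := by
      have h := bA.linearIndependent.comp _ hcomp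
      have he : (fun i : Fin n => cp.ι (bV i))
          = (⇑bA ∘ fun i : Fin n => ((Pi.single i 1 : Fin n → ℕ), (1 : G))) := by
        funext i; exact hι1 i
      rw [he]; exact h
    suffices hz : ∀ u : V, cp.ι u = 0 → u = 0 by
      intro v v' h
      have := hz (v - v') (by rw [map_sub, h, sub_self])
      exact sub_eq_zero.mp this
    intro u hu
    have hrep := bV.sum_repr u
    have hs : ∑ i, bV.repr u i • cp.ι (bV i) = 0 := by
      have : ∑ i, bV.repr u i • cp.ι (bV i) = cp.ι u := by
        conv_rhs => rw [← hrep]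
        simp only [map_sum, map_smul]
      rw [this, hu]
    have hz := Fintype.linearIndependent_iff.mp hli _ hs
    rw [← hrep]
    exact Finset.sum_eq_zero fun i _ => by rw [hz i, zero_smul]
  constructor
  · rintro ⟨⟨hinj, _⟩, hone, hmul⟩
    have hchar : IsCharacter G χς := by
      intro g h
      have e1 : ς (cp.w g * cp.w h) = ((f g h : k) * (χς (g * h) : k)) • cp.w (g * h) := by
        rw [cp.w_mul, map_smul, hsw, smul_smul]
      have e2 : ς (cp.w g * cp.w h)
          = ((χς g : k) * ((χς h : k) * (f g h : k))) • cp.w (g * h) := by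
        rw [hmul, hsw, hsw, smul_mul_assoc, mul_smul_comm, cp.w_mul, smul_smul, smul_smul,
          mul_assoc]
      have h2 := hsc _ _ _ (hwne (g * h)) (e1.symm.trans e2)
      apply Units.ext
      rw [Units.val_mul]
      apply mul_left_cancel₀ (Units.ne_zero (f g h))
      rw [h2]; ring
    have hχ1 : χς 1 = 1 := by
      have := hchar 1 1
      rw [one_mul] at this
      exact left_eq_mul.mp this
    have hsι' : ∀ v : V, ς (cp.ι v) = cp.ι (ςhat v) := by
      intro v; rw [hsι, hχ1, Units.val_one, one_smul]
    have hςinj : Function.Injective ςhat := by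
      intro v v' hv
      apply hιinj
      apply hinj
      rw [hsι', hsι', hv]
    refine ⟨⟨hςinj, LinearMap.injective_iff_surjective.mp hςinj⟩, ?_, hchar⟩
    intro g v
    have e1 : ς (cp.w g * cp.ι v) = (χς g : k) • (cp.ι (ςhat (ρV g v)) * cp.w g) := by
      rw [cp.w_ι]
      simpa [Paper.CrossedProduct.mon] using S8Aux.sig_list cp hςdef [ρV g v] g
    have e2 : ς (cp.w g * cp.ι v) = (χς g : k) • (cp.ι (ρV g (ςhat v)) * cp.w g) := by
      rw [hmul, hsw, hsι', smul_mul_assoc, cp.w_ι]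
    exact hιinj (hwc g _ _ (hscancel (χς g) _ _ (e1.symm.trans e2)))
  · rintro ⟨hbij, hG, hchar⟩
    have hχ1 : χς 1 = 1 := by
      have := hchar 1 1
      rw [one_mul] at this
      exact left_eq_mul.mp this
    have hone : ς 1 = 1 := by
      have := S8Aux.sig_list cp hςdef [] 1
      simpa [S8Aux.mon_nil, cp.w_one, hχ1] using this
    have key : ∀ (l l' : List V) (g h : G),
        ς ((cp.mon l * cp.w g) * (cp.mon l' * cp.w h))
          = ς (cp.mon l * cp.w g) * ς (cp.mon l' * cp.w h) := by
      intro l l' g h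
      have eprod : ∀ L L' : List V, (cp.mon L * cp.w g) * (cp.mon L' * cp.w h)
          = (f g h : k) • (cp.mon (L ++ L'.map (ρV g)) * cp.w (g * h)) := by
        intro L L'
        calc (cp.mon L * cp.w g) * (cp.mon L' * cp.w h)
            = cp.mon L * ((cp.w g * cp.mon L') * cp.w h) := by
              rw [mul_assoc (cp.mon L) (cp.w g), ← mul_assoc (cp.w g) (cp.mon L') (cp.w h)]
          _ = cp.mon L * ((cp.mon (L'.map (ρV g)) * cp.w g) * cp.w h) := by rw [S8Aux.w_mon]
          _ = cp.mon L * (cp.mon (L'.map (ρV g)) * (cp.w g * cp.w h)) := by rw [mul_assoc]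
          _ = cp.mon L * (cp.mon (L'.map (ρV g)) * ((f g h : k) • cp.w (g * h))) := by
              rw [cp.w_mul]
          _ = (f g h : k) • (cp.mon L * (cp.mon (L'.map (ρV g)) * cp.w (g * h))) := by
              rw [mul_smul_comm, mul_smul_comm]
          _ = (f g h : k) • (cp.mon (L ++ L'.map (ρV g)) * cp.w (g * h)) := by
              rw [S8Aux.mon_append, mul_assoc]
      have hmaps : (l'.map (ρV g)).map ςhat = (l'.map ςhat).map (ρV g) := by
        rw [List.map_map, List.map_map]
        congr 1
        funext v
        exact hG g v
      calc ς ((cp.mon l * cp.w g) * (cp.mon l' * cp.w h))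
          = (f g h : k) • ς (cp.mon (l ++ l'.map (ρV g)) * cp.w (g * h)) := by
            rw [eprod, map_smul]
        _ = ((f g h : k) * (χς (g * h) : k))
              • (cp.mon ((l ++ l'.map (ρV g)).map ςhat) * cp.w (g * h)) := by
            rw [S8Aux.sig_list cp hςdef, smul_smul]
        _ = ((χς g : k) * (χς h : k))
              • ((f g h : k)
                • (cp.mon (l.map ςhat ++ (l'.map ςhat).map (ρV g)) * cp.w (g * h))) := by
            rw [List.map_append, hmaps, smul_smul, hchar g h, Units.val_mul]
            congr 1
            ring
        _ = ((χς g : k) • (cp.mon (l.map ςhat) * cp.w g))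
              * ((χς h : k) • (cp.mon (l'.map ςhat) * cp.w h)) := by
            rw [smul_mul_smul_comm, eprod]
        _ = ς (cp.mon l * cp.w g) * ς (cp.mon l' * cp.w h) := by
            rw [S8Aux.sig_list cp hςdef l g, S8Aux.sig_list cp hςdef l' h]
    have hmul : ∀ a b : A, ς (a * b) = ς a * ς b := by
      have hext : (LinearMap.mul k A).compr₂ ς = (LinearMap.mul k A).compl₁₂ ς ς := by
        refine bA.ext fun p => ?_
        obtain ⟨d, g⟩ := p
        refine bA.ext fun p' => ?_
        obtain ⟨e, h⟩ := p'
        simp only [LinearMap.compr₂_apply, LinearMap.compl₁₂_apply, LinearMap.mul_apply']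
        rw [hmon, hmon]
        exact key _ _ _ _
      intro a b
      have := DFunLike.congr_fun (DFunLike.congr_fun hext a) b
      simpa using this
    refine ⟨?_, hone, hmul⟩
    obtain ⟨bA', hbA'⟩ := cp.isBasis (bV.map (LinearEquiv.ofBijective ςhat hbij))
    have hmon' : ∀ (d : Fin n → ℕ) (g : G),
        bA' (d, g) = cp.mon (S8Aux.listOf (⇑(bV.map (LinearEquiv.ofBijective ςhat hbij))) d)
          * cp.w g :=
      fun d g => by rw [hbA', ← S8Aux.mon_listOf]
    have hς_eq : ς = (bA.equiv (bA'.unitsSMul fun p => χς p.2) (Equiv.refl _)).toLinearMap := by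
      refine bA.ext fun p => ?_
      obtain ⟨d, g⟩ := p
      rw [LinearEquiv.coe_toLinearMap, Module.Basis.equiv_apply, Equiv.refl_apply,
        Module.Basis.unitsSMul_apply, Units.smul_def]
      have h1 : (S8Aux.listOf (⇑bV) d).map ςhat
          = S8Aux.listOf (⇑(bV.map (LinearEquiv.ofBijective ςhat hbij))) d := by
        have hfun : ςhat ∘ ⇑bV = ⇑(bV.map (LinearEquiv.ofBijective ςhat hbij)) := by
          funext i
          simp [Module.Basis.map_apply]
        rw [S8Aux.map_listOf, hfun]
      rw [hmon, S8Aux.sig_list cp hςdef, h1, ← hmon']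
    rw [hς_eq]
    exact (bA.equiv (bA'.unitsSMul fun p => χς p.2) (Equiv.refl _)).bijective
end
end

section
/- Let A = S(V)#_f G, let α : A → A be the algebra automorphism determined by a bijective k[G]-linear map α̂ : V → V and a group homomorphism χ_α : G → k^× (α(v) = α̂(v), α(w_g) = χ_α(g)w_g), and let ς : A → A be the algebra automorphism determined likewise by a bijective k[G]-linear ς̂ : V → V and a group homomorphism χ_ς. Let δ̂_1, δ̂_2 : V → A be k-linear maps and δ̄_1, δ̄_2 : G → A maps. Then: (1) the assignment δ_1(v_1⋯v_m w_g) := Σ_{j=1}^m α(v_1⋯v_{j-1})δ̂_1(v_j)ς(v_{j+1}⋯v_m w_g) + α(v_1⋯v_m)δ̄_1(g) gives a well-defined k-linear map δ_1 : A → A if and only if δ̂_1(v)ς̂(w) + α̂(v)δ̂_1(w) = δ̂_1(w)ς̂(v) + α̂(w)δ̂_1(v) for all v,w ∈ V; and (2) the assignment δ_2(v_1⋯v_m w_g) := Σ_{j=1}^m ς(α^{-1}(v_1⋯v_{j-1}))δ̂_2(v_j)v_{j+1}⋯v_m w_g + ς(α^{-1}(v_1⋯v_m))δ̄_2(g) gives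 a well-defined k-linear map δ_2 : A → A if and only if δ̂_2(v)w + ς̂(α̂^{-1}(v))δ̂_2(w) = δ̂_2(w)v + ς̂(α̂^{-1}(w))δ̂_2(v) for all v,w ∈ V. -/
open TensorProduct

noncomputable section
namespace Paper

variable {k : Type*} [Field k]

section WellDefAux

variable {k : Type*} [Field k]
variable {G : Type*} [Group G] {V : Type*} [AddCommGroup V] [Module k V]
variable {A : Type*} [Ring A] [Algebra k A]
variable {ρV : Representation k G V} {f : G → G → kˣ}

namespace CrossedProduct

variable (cp : CrossedProduct A ρV f)

lemma mon_nil : cp.mon ([] : List V) = 1 := rfl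

lemma mon_cons (x : V) (l : List V) : cp.mon (x :: l) = cp.ι x * cp.mon l := by
  simp [mon]

lemma pairwise_comm (l : List V) : (l.map cp.ι).Pairwise Commute := by
  rw [List.pairwise_map]
  induction l with
  | nil => exact .nil
  | cons a t ih => exact .cons (fun b _ => cp.ι_comm a b) ih

lemma mon_perm {l l' : List V} (h : l.Perm l') : cp.mon l = cp.mon l' :=
  List.Perm.prod_eq' (h.map cp.ι) (cp.pairwise_comm l)

variable (φhat ψhat : V →ₗ[k] V) (δhat : V →ₗ[k] A) (δbar wψ : G → A)

/-- Recursive form of the twisted Leibniz formula. -/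
def Fv : List V → G → A
  | [], g => δbar g
  | x :: l, g => δhat x * (cp.mon (l.map ψhat) * wψ g) + cp.ι (φhat x) * Fv l g

lemma Fv_perm
    (hcond : ∀ v w : V, δhat v * cp.ι (ψhat w) + cp.ι (φhat v) * δhat w
      = δhat w * cp.ι (ψhat v) + cp.ι (φhat w) * δhat v)
    {l l' : List V} (h : l.Perm l') (g : G) :
    Fv cp φhat ψhat δhat δbar wψ l g = Fv cp φhat ψhat δhat δbar wψ l' g := by
  induction h with
  | nil => rfl
  | cons x h ih =>
      simp only [Fv]
      rw [ih, cp.mon_perm (h.map ψhat)]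
  | swap x y l =>
      simp only [Fv, List.map_cons, mon_cons]
      have h1 := congrArg (· * (cp.mon (l.map ψhat) * wψ g)) (hcond y x)
      simp only [add_mul, mul_assoc] at h1
      have h2 : cp.ι (φhat y) * (cp.ι (φhat x) * Fv cp φhat ψhat δhat δbar wψ l g)
          = cp.ι (φhat x) * (cp.ι (φhat y) * Fv cp φhat ψhat δhat δbar wψ l g) := by
        rw [← mul_assoc, cp.ι_comm, mul_assoc]
      simp only [mul_add, mul_assoc]
      rw [← add_assoc, ← add_assoc, h1, h2]
  | trans _ _ ih1 ih2 => rw [ih1, ih2]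

lemma Fv_eq_sum : ∀ (m : ℕ) (v : Fin m → V) (g : G),
    Fv cp φhat ψhat δhat δbar wψ (List.ofFn v) g
      = (∑ j : Fin m, cp.mon (((List.ofFn v).take j).map φhat) * δhat (v j)
          * (cp.mon (((List.ofFn v).drop (j + 1)).map ψhat) * wψ g))
        + cp.mon ((List.ofFn v).map φhat) * δbar g := by
  intro m
  induction m with
  | zero => intro v g; simp [Fv, mon_nil]
  | succ m ih =>
      intro v g
      rw [List.ofFn_succ]
      simp only [Fv, Fin.sum_univ_succ, Fin.val_zero, Fin.val_succ, List.take_zero,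
        List.take_succ_cons, List.drop_succ_cons, List.drop_zero, List.map_cons, List.map_nil,
        mon_cons, mon_nil, one_mul, mul_one]
      rw [ih]
      simp only [mul_add, Finset.mul_sum, mul_assoc, add_assoc]

lemma sum_eq_Fv (φ ψ : A → A)
    (hφm : ∀ l : List V, φ (cp.mon l) = cp.mon (l.map φhat))
    (hψm : ∀ (l : List V) (g : G), ψ (cp.mon l * cp.w g) = cp.mon (l.map ψhat) * wψ g)
    (m : ℕ) (v : Fin m → V) (g : G) :
    (∑ j : Fin m, φ (cp.pre v j) * δhat (v j) * ψ (cp.suf v j * cp.w g))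
      + φ (cp.mon (List.ofFn v)) * δbar g
      = Fv cp φhat ψhat δhat δbar wψ (List.ofFn v) g := by
  rw [Fv_eq_sum]
  simp only [pre, suf, hφm, hψm]

variable {m : ℕ}

/-- `v ↦ F (v 0) * M (tail v)` as a multilinear map. -/
def consMul (F : V →ₗ[k] A) (M : MultilinearMap k (fun _ : Fin m => V) A) :
    MultilinearMap k (fun _ : Fin (m + 1) => V) A :=
  LinearMap.uncurryLeft
    { toFun := fun x => (LinearMap.mulLeft k (F x)).compMultilinearMap M
      map_add' := fun x y => by
        ext v
        simp [add_mul]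
      map_smul' := fun c x => by
        ext v
        simp [smul_mul_assoc] }

@[simp] lemma consMul_apply (F : V →ₗ[k] A) (M : MultilinearMap k (fun _ : Fin m => V) A)
    (v : Fin (m + 1) → V) : consMul F M v = F (v 0) * M (Fin.tail v) := rfl

/-- `v ↦ δ (mon v * w g)` as a multilinear map. -/
def monMul (g : G) (δ : Module.End k A) : MultilinearMap k (fun _ : Fin m => V) A :=
  ((δ : A →ₗ[k] A) ∘ₗ LinearMap.mulRight k (cp.w g)).compMultilinearMap
    ((MultilinearMap.mkPiAlgebraFin k m A).compLinearMap fun _ => cp.ι)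

lemma monMul_apply (g : G) (δ : Module.End k A) (v : Fin m → V) :
    monMul cp g δ v = δ (cp.mon (List.ofFn v) * cp.w g) := by
  simp only [monMul, LinearMap.compMultilinearMap_apply, MultilinearMap.compLinearMap_apply,
    MultilinearMap.mkPiAlgebraFin_apply, LinearMap.coe_comp, Function.comp_apply,
    LinearMap.mulRight_apply, mon, List.map_ofFn]
  rfl

/-- `Fv (ofFn v) g` as a multilinear map. -/
def FvM : (m : ℕ) → G → MultilinearMap k (fun _ : Fin m => V) A
  | 0, g => MultilinearMap.constOfIsEmpty k _ (δbar g)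
  | m + 1, g =>
      consMul δhat ((LinearMap.mulRight k (wψ g)).compMultilinearMap
          ((MultilinearMap.mkPiAlgebraFin k m A).compLinearMap fun _ => cp.ι ∘ₗ ψhat))
        + consMul (cp.ι ∘ₗ φhat) (FvM m g)

lemma FvM_apply : ∀ (m : ℕ) (g : G) (v : Fin m → V),
    FvM cp φhat ψhat δhat δbar wψ m g v = Fv cp φhat ψhat δhat δbar wψ (List.ofFn v) g := by
  intro m
  induction m with
  | zero => intro g v; simp [FvM, Fv, List.ofFn_zero]
  | succ m ih =>
      intro g v
      rw [List.ofFn_succ]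
      simp only [FvM, MultilinearMap.add_apply, consMul_apply,
        LinearMap.compMultilinearMap_apply, MultilinearMap.compLinearMap_apply,
        MultilinearMap.mkPiAlgebraFin_apply, LinearMap.mulRight_apply, LinearMap.coe_comp,
        Function.comp_apply, Fv, ih]
      have h1 : cp.mon (List.map (⇑ψhat) (List.ofFn fun i => v i.succ))
          = (List.ofFn fun i => cp.ι (ψhat (Fin.tail v i))).prod := by
        rw [mon, List.map_map, List.map_ofFn]
        rfl
      rw [h1]
      rfl

variable [FiniteDimensional k V]

lemma exists_delta
    (hcond : ∀ v w : V, δhat v * cp.ι (ψhat w) + cp.ι (φhat v) * δhat w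
      = δhat w * cp.ι (ψhat v) + cp.ι (φhat w) * δhat v) :
    ∃ δ : Module.End k A, ∀ (m : ℕ) (v : Fin m → V) (g : G),
      δ (cp.mon (List.ofFn v) * cp.w g) = Fv cp φhat ψhat δhat δbar wψ (List.ofFn v) g := by
  set n := Module.finrank k V with hn
  set bV : Module.Basis (Fin n) k V := Module.finBasis k V with hbV
  obtain ⟨bA, hbA⟩ := cp.isBasis bV
  set dl : (Fin n → ℕ) → List V :=
    fun d => (List.ofFn fun i => List.replicate (d i) (bV i)).flatten with hdl
  set δ : Module.End k A :=
    bA.constr k fun p => Fv cp φhat ψhat δhat δbar wψ (dl p.1) p.2 with hδ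
  have mon_dl : ∀ d : Fin n → ℕ,
      cp.mon (dl d) = (List.ofFn fun i => cp.ι (bV i) ^ d i).prod := by
    intro d
    show cp.mon ((List.ofFn fun i => List.replicate (d i) (bV i)).flatten) = _
    rw [mon, List.map_flatten, List.map_ofFn,
      show (List.map cp.ι ∘ fun i => List.replicate (d i) (bV i))
        = fun i => List.replicate (d i) (cp.ι (bV i)) from funext fun i => List.map_replicate,
      List.prod_flatten, List.map_ofFn,
      show (List.prod ∘ fun i => List.replicate (d i) (cp.ι (bV i)))
        = fun i => cp.ι (bV i) ^ d i from funext fun i => List.prod_replicate _ _]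
  refine ⟨δ, ?_⟩
  intro m v g
  have key : monMul cp g δ = FvM cp φhat ψhat δhat δbar wψ m g := by
    apply Module.Basis.ext_multilinear (fun _ => bV)
    intro t
    set cnt : Fin n → ℕ := fun i => (List.ofFn t).count i with hcnt
    have hperm0 : (List.ofFn t).Perm
        (List.ofFn fun i => List.replicate (cnt i) i).flatten := by
      refine List.perm_iff_count.mpr fun a => ?_
      rw [List.count_flatten, List.map_ofFn]
      have : (List.count a ∘ fun i => List.replicate (cnt i) i)
          = fun i => if a = i then cnt i else 0 := by
        funext i
        simp only [Function.comp_apply, List.count_replicate, beq_iff_eq]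
        by_cases h : i = a
        · subst h; simp
        · rw [if_neg h, if_neg fun hh => h hh.symm]
      rw [this, List.sum_ofFn, Finset.sum_ite_eq]
      simp; rfl
    have hperm : (List.ofFn fun i => bV (t i)).Perm (dl cnt) := by
      have h := hperm0.map bV
      rw [List.map_ofFn, List.map_flatten, List.map_ofFn] at h
      simpa [Function.comp_def, List.map_replicate, hdl] using h
    rw [monMul_apply, FvM_apply, cp.mon_perm hperm,
      Fv_perm cp φhat ψhat δhat δbar wψ hcond hperm g]
    have hb : cp.mon (dl cnt) * cp.w g = bA (cnt, g) := by
      rw [hbA, mon_dl]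
    rw [hb, hδ, Module.Basis.constr_basis]
  have := DFunLike.congr_fun key v
  rwa [monMul_apply, FvM_apply] at this

lemma main_iff (φ ψ : A → A)
    (hφm : ∀ l : List V, φ (cp.mon l) = cp.mon (l.map φhat))
    (hψm : ∀ (l : List V) (g : G), ψ (cp.mon l * cp.w g) = cp.mon (l.map ψhat) * wψ g)
    (hwψ1 : wψ 1 = 1) :
    (∃ δ : Module.End k A, ∀ (m : ℕ) (v : Fin m → V) (g : G),
        δ (cp.mon (List.ofFn v) * cp.w g)
          = (∑ j : Fin m, φ (cp.pre v j) * δhat (v j) * ψ (cp.suf v j * cp.w g))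
            + φ (cp.mon (List.ofFn v)) * δbar g)
    ↔ ∀ v w : V, δhat v * cp.ι (ψhat w) + cp.ι (φhat v) * δhat w
        = δhat w * cp.ι (ψhat v) + cp.ι (φhat w) * δhat v := by
  constructor
  · rintro ⟨δ, hδ⟩ v w
    have h1 := hδ 2 ![v, w] 1
    have h2 := hδ 2 ![w, v] 1
    rw [sum_eq_Fv cp φhat ψhat δhat δbar wψ φ ψ hφm hψm] at h1 h2
    have hofn : ∀ a b : V, List.ofFn ![a, b] = [a, b] := by
      intro a b
      simp [List.ofFn_succ]
    rw [hofn] at h1 h2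
    have hmon : cp.mon [v, w] * cp.w 1 = cp.mon [w, v] * cp.w 1 := by
      rw [cp.mon_perm (List.Perm.swap w v [])]
    have key : Fv cp φhat ψhat δhat δbar wψ [v, w] 1
        = Fv cp φhat ψhat δhat δbar wψ [w, v] 1 := by
      rw [← h1, ← h2, hmon]
    simp only [Fv, List.map_cons, List.map_nil, mon_cons, mon_nil, hwψ1, mul_one, one_mul,
      mul_add] at key
    have hc : cp.ι (φhat v) * (cp.ι (φhat w) * δbar 1)
        = cp.ι (φhat w) * (cp.ι (φhat v) * δbar 1) := by
      rw [← mul_assoc, cp.ι_comm, mul_assoc]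
    rw [← add_assoc, ← add_assoc, hc] at key
    exact add_right_cancel key
  · intro hcond
    obtain ⟨δ, hδ⟩ := cp.exists_delta φhat ψhat δhat δbar wψ hcond
    refine ⟨δ, fun m v g => ?_⟩
    rw [hδ, sum_eq_Fv cp φhat ψhat δhat δbar wψ φ ψ hφm hψm]

end CrossedProduct

end WellDefAux

end Paper

open Paper in
/-- Well-definedness of the twisted derivations `δ₁`, `δ₂` on the crossed
product `A = S(V) #_f G`. -/
theorem statement_9 {k : Type*} [Field k]
    {G : Type*} [Group G] {V : Type*} [AddCommGroup V] [Module k V] [FiniteDimensional k V]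
    (ρV : Representation k G V) (f : G → G → kˣ) (hf : IsCocycle G f)
    {A : Type*} [Ring A] [Algebra k A] (cp : CrossedProduct A ρV f)
    (αhat : V ≃ₗ[k] V) (hαG : GLinear ρV (αhat : V →ₗ[k] V))
    (χα : G → kˣ) (hχα : IsCharacter G χα)
    (α : A ≃ₐ[k] A)
    (hαι : ∀ v : V, α (cp.ι v) = cp.ι (αhat v))
    (hαw : ∀ g : G, α (cp.w g) = (χα g : k) • cp.w g)
    (ςhat : V ≃ₗ[k] V) (hςG : GLinear ρV (ςhat : V →ₗ[k] V))
    (χς : G → kˣ) (hχς : IsCharacter G χς)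
    (ς : Module.End k A) (hςdef : SigmaDef cp (ςhat : V →ₗ[k] V) χς ς)
    (δhat₁ δhat₂ : V →ₗ[k] A) (δbar₁ δbar₂ : G → A) :
    ((∃ δ₁ : Module.End k A, Delta1Def cp α ς δhat₁ δbar₁ δ₁)
      ↔ ∀ v w : V,
          δhat₁ v * cp.ι (ςhat w) + cp.ι (αhat v) * δhat₁ w
            = δhat₁ w * cp.ι (ςhat v) + cp.ι (αhat w) * δhat₁ v)
    ∧ ((∃ δ₂ : Module.End k A, Delta2Def cp α ς δhat₂ δbar₂ δ₂)
      ↔ ∀ v w : V,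
          δhat₂ v * cp.ι w + cp.ι (ςhat (αhat.symm v)) * δhat₂ w
            = δhat₂ w * cp.ι v + cp.ι (ςhat (αhat.symm w)) * δhat₂ v) := by
  have hχς1 : χς 1 = 1 := by
    have h := hχς 1 1
    rw [one_mul] at h
    exact (mul_left_cancel (a := χς 1) (by rw [mul_one]; exact h)).symm
  have hσlist : ∀ (l : List V) (g : G), ς (cp.mon l * cp.w g)
      = (χς g : k) • (cp.mon (l.map ⇑ςhat) * cp.w g) := by
    intro l g
    have h := hςdef l.length l.get g
    rw [List.ofFn_get] at h
    have e : (List.ofFn fun i => (ςhat : V →ₗ[k] V) (l.get i)) = l.map ⇑ςhat := by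
      rw [show (fun i => (ςhat : V →ₗ[k] V) (l.get i)) = ⇑ςhat ∘ l.get from rfl,
        ← List.map_ofFn, List.ofFn_get]
    rw [h, e]
  have hαmon : ∀ l : List V, α (cp.mon l) = cp.mon (l.map ⇑αhat) := by
    intro l
    induction l with
    | nil =>simp [CrossedProduct.mon_nil]
    | cons x t ih =>
        rw [List.map_cons, cp.mon_cons, cp.mon_cons, map_mul, hαι, ih]
  have hαsymι : ∀ x : V, α.symm (cp.ι x) = cp.ι (αhat.symm x) := by
    intro x
    apply α.injective
    rw [AlgEquiv.apply_symm_apply, hαι, LinearEquiv.apply_symm_apply]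
  have hαsymmon : ∀ l : List V, α.symm (cp.mon l) = cp.mon (l.map ⇑αhat.symm) := by
    intro l
    induction l with
    | nil => simp [CrossedProduct.mon_nil]
    | cons x t ih =>
        rw [List.map_cons, cp.mon_cons, cp.mon_cons, map_mul, hαsymι, ih]
  have hσmon : ∀ l : List V, ς (cp.mon l) = cp.mon (l.map ⇑ςhat) := by
    intro l
    have h := hσlist l 1
    rw [cp.w_one, mul_one, mul_one, hχς1] at h
    simpa using h
  constructor
  · exact cp.main_iff (αhat : V →ₗ[k] V) (ςhat : V →ₗ[k] V) δhat₁ δbar₁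
      (fun g => (χς g : k) • cp.w g) (fun x => α x) (fun x => ς x) hαmon
      (fun l g => by beta_reduce; rw [hσlist l g, mul_smul_comm]; rfl)
      (by show (χς (1:G) : k) • cp.w 1 = 1; rw [hχς1]; simp [cp.w_one])
  · exact cp.main_iff ((ςhat : V →ₗ[k] V) ∘ₗ (αhat.symm : V →ₗ[k] V)) LinearMap.id δhat₂ δbar₂
      cp.w (fun x => ς (α.symm x)) (fun x => x)
      (fun l => by beta_reduce; rw [hαsymmon, hσmon, List.map_map]; rfl)
      (fun l g => by simp)
      cp.w_one
end
end

section
/- In the setting of the well-definedness lemma (A = S(V)#_f G; α, ς automorphisms of A determined by bijective k[G]-linear α̂, ς̂ and group homomorphisms χ_α, χ_ς; δ̂_1, δ̂_2 : V → A linear; δ̄_1, δ̄_2 : G → A), assume ς is an algebra automorphism and δ_1, δ_2 : A → A are well defined by the formulas δ_1(v_1⋯v_m w_g) = Σ_j α(v_1⋯v_{j-1})δ̂_1(v_j)ς(v_{j+1}⋯v_m w_g) + α(v_1⋯v_m)δ̄_1(g) and δ_2(v_1⋯v_m w_g) = Σ_j ς(α^{-1}(v_1⋯v_{j-1}))δ̂_2(v_j)v_{j+1}⋯v_m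 w_g + ς(α^{-1}(v_1⋯v_m))δ̄_2(g). Then: (1) δ_1 satisfies δ_1(x_1⋯x_m) = Σ_{j=1}^m α(x_1⋯x_{j-1})δ_1(x_j)ς(x_{j+1}⋯x_m) for all x_1,…,x_m ∈ (k#_fG)∪V if and only if, for all v ∈ V and g,h ∈ G: (a) δ̂_1(^gv)χ_ς(g)w_g + α̂(^gv)δ̄_1(g) = δ̄_1(g)ς̂(v) + χ_α(g)w_g·δ̂_1(v), and (b) f(g,h)δ̄_1(gh) = δ̄_1(g)χ_ς(h)w_h + χ_α(g)w_g·δ̄_1(h); (2) δ_2 satisfies δ_2(x_1⋯x_m) = Σ_{j=1}^m ς(α^{-1}(x_1⋯x_{j-1}))δ_2(x_j)x_{j+1}⋯x_m for all such x_i if and only if, for all v ∈ V and g,h ∈ G: (a) δ̂_2(^gv)w_g + ς̂(α̂^{-1}(^gv))δ̄_2(g) = δ̄_2(g)v + χ_ς(g)χ_α^{-1}(g)w_g·δ̂_2(v), and (b) f(g,h)δ̄_2(gh) = δ̄_2(g)w_h + χ_ς(g)χ_α^{-1}(g)w_g·δ̄_2(h). -/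
open TensorProduct

noncomputable section
namespace Paper
namespace StTen
set_option linter.unusedSectionVars false

variable {k : Type*} [Field k]
variable {G : Type*} [Group G] {V : Type*} [AddCommGroup V] [Module k V]
variable {A : Type*} [Ring A] [Algebra k A]
variable {ρV : Representation k G V} {f : G → G → kˣ}

lemma mon_nil (cp : CrossedProduct A ρV f) : cp.mon [] = 1 := rfl

lemma mon_cons (cp : CrossedProduct A ρV f) (v : V) (l : List V) :
    cp.mon (v :: l) = cp.ι v * cp.mon l := by
  simp [CrossedProduct.mon]

lemma ofFn_cons {m : ℕ} (v : V) (u : Fin m → V) :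
    List.ofFn (Fin.cons v u) = v :: List.ofFn u := by
  rw [List.ofFn_succ]
  simp

lemma mon_ofFn_cons (cp : CrossedProduct A ρV f) {m : ℕ} (v : V) (u : Fin m → V) :
    cp.mon (List.ofFn (Fin.cons v u)) = cp.ι v * cp.mon (List.ofFn u) := by
  rw [ofFn_cons, mon_cons]

lemma pre_cons_zero (cp : CrossedProduct A ρV f) {m : ℕ} (v : V) (u : Fin m → V) :
    cp.pre (Fin.cons v u) 0 = 1 := by
  simp [CrossedProduct.pre, mon_nil]

lemma pre_cons_succ (cp : CrossedProduct A ρV f) {m : ℕ} (v : V) (u : Fin m → V) (j : Fin m) :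
    cp.pre (Fin.cons v u) j.succ = cp.ι v * cp.pre u j := by
  rw [CrossedProduct.pre, CrossedProduct.pre, ofFn_cons]
  rw [Fin.val_succ, List.take_succ_cons, mon_cons]

lemma suf_cons_zero (cp : CrossedProduct A ρV f) {m : ℕ} (v : V) (u : Fin m → V) :
    cp.suf (Fin.cons v u) 0 = cp.mon (List.ofFn u) := by
  rw [CrossedProduct.suf, ofFn_cons]
  simp

lemma suf_cons_succ (cp : CrossedProduct A ρV f) {m : ℕ} (v : V) (u : Fin m → V) (j : Fin m) :
    cp.suf (Fin.cons v u) j.succ = cp.suf u j := by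
  rw [CrossedProduct.suf, CrossedProduct.suf, ofFn_cons]
  rw [Fin.val_succ, List.drop_succ_cons]

/-- Spanning induction for the crossed product. -/
lemma span_ind [FiniteDimensional k V] (cp : CrossedProduct A ρV f) {p : A → Prop}
    (h0 : ∀ (m : ℕ) (v : Fin m → V) (g : G), p (cp.mon (List.ofFn v) * cp.w g))
    (hadd : ∀ a b, p a → p b → p (a + b))
    (hsmul : ∀ (c : k) (a : A), p a → p (c • a)) (a : A) : p a := by
  obtain ⟨bA, hbA⟩ := cp.isBasis (Module.finBasis k V)
  have h1 : ∀ x ∈ Set.range bA, p x := by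
    rintro x ⟨⟨d, g⟩, rfl⟩
    rw [hbA]
    set bV := Module.finBasis k V
    have : (List.ofFn fun i => cp.ι (bV i) ^ d i).prod =
        cp.mon ((List.ofFn fun i => List.replicate (d i) (bV i)).flatten) := by
      rw [CrossedProduct.mon, List.map_flatten, List.prod_flatten, List.map_ofFn, List.map_ofFn]
      refine congrArg List.prod (congrArg List.ofFn (funext fun i => ?_))
      simp [Function.comp, List.prod_replicate]
    rw [this]
    set l := (List.ofFn fun i => List.replicate (d i) (bV i)).flatten
    have : l = List.ofFn l.get := (List.ofFn_get l).symm
    rw [this]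
    exact h0 _ _ _
  have hz : p 0 := by
    have := hsmul 0 _ (h0 0 (fun i => i.elim0) 1)
    rwa [zero_smul] at this
  have hmem : a ∈ Submodule.span k (Set.range bA) := Module.Basis.mem_span bA a
  induction hmem using Submodule.span_induction with
  | mem x hx => exact h1 x hx
  | zero => exact hz
  | add x y _ _ px py => exact hadd x y px py
  | smul c x _ px => exact hsmul c x px

section Master
variable [FiniteDimensional k V]
variable {cp : CrossedProduct A ρV f}
variable {φ ψ : A →ₗ[k] A} {φhat ψhat : V →ₗ[k] V} {cφ cψ : G → kˣ}
variable {δhat : V →ₗ[k] A} {δbar : G → A} {δ : Module.End k A}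

variable (cp φ ψ δhat δbar δ) in
/-- normal form hypothesis -/
def NF : Prop :=
  ∀ (m : ℕ) (v : Fin m → V) (g : G),
    δ (cp.mon (List.ofFn v) * cp.w g)
      = (∑ j : Fin m, φ (cp.pre v j) * δhat (v j) * ψ (cp.suf v j * cp.w g))
        + φ (cp.mon (List.ofFn v)) * δbar g

lemma char_one {χ : G → kˣ} (hχ : IsCharacter G χ) : χ 1 = 1 := by
  have := hχ 1 1
  rw [mul_one] at this
  exact (left_eq_mul.mp this)

lemma dw (hδ : NF cp φ ψ δhat δbar δ) (hφ1 : φ 1 = 1) (g : G) : δ (cp.w g) = δbar g := by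
  have := hδ 0 (fun i => i.elim0) g
  simpa [mon_nil, hφ1] using this

lemma d1 (hδ : NF cp φ ψ δhat δbar δ) (hφ1 : φ 1 = 1) : δ 1 = δbar 1 := by
  have := dw hδ hφ1 1
  rwa [cp.w_one] at this

lemma dmon1 (hδ : NF cp φ ψ δhat δbar δ) (hφ1 : φ 1 = 1)
    (hφι : ∀ v, φ (cp.ι v) = cp.ι (φhat v)) (v : V) (g : G) :
    δ (cp.ι v * cp.w g) = δhat v * ψ (cp.w g) + cp.ι (φhat v) * δbar g := by
  have := hδ 1 (fun _ => v) g
  simp only [List.ofFn_succ, List.ofFn_zero, Fin.sum_univ_one] at this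
  simp only [CrossedProduct.pre, CrossedProduct.suf, List.ofFn_succ, List.ofFn_zero] at this
  simp [mon_cons, mon_nil, hφ1, hφι] at this
  simpa using this

lemma dι (hδ : NF cp φ ψ δhat δbar δ) (hφ1 : φ 1 = 1) (hψ1 : ψ 1 = 1)
    (hφι : ∀ v, φ (cp.ι v) = cp.ι (φhat v)) (hb1 : δbar 1 = 0) (v : V) :
    δ (cp.ι v) = δhat v := by
  have := dmon1 hδ hφ1 hφι v 1
  rw [cp.w_one, mul_one, hψ1, mul_one, hb1, mul_zero, add_zero] at this
  exact this

lemma L1 (hδ : NF cp φ ψ δhat δbar δ) (hφ1 : φ 1 = 1)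
    (hφm : ∀ a b : A, φ (a * b) = φ a * φ b)
    (hφι : ∀ v, φ (cp.ι v) = cp.ι (φhat v))
    (v : V) (a : A) :
    δ (cp.ι v * a) = δhat v * ψ a + cp.ι (φhat v) * δ a := by
  refine span_ind cp
    (p := fun a => δ (cp.ι v * a) = δhat v * ψ a + cp.ι (φhat v) * δ a) ?_ ?_ ?_ a
  · intro m u g
    rw [← mul_assoc, ← mon_ofFn_cons, hδ (m + 1) (Fin.cons v u) g, Fin.sum_univ_succ]
    simp only [pre_cons_zero, pre_cons_succ, suf_cons_zero, suf_cons_succ,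
      Fin.cons_zero, Fin.cons_succ, hφ1, one_mul, hφm, mon_ofFn_cons]
    rw [hδ m u g]
    simp only [Finset.mul_sum, mul_add, hφι, mul_assoc]
    abel
  · intro a b pa pb
    simp only [mul_add, map_add, pa, pb, smul_add]
    abel
  · intro c a pa
    simp only [mul_smul_comm, map_smul, pa, smul_add, mul_smul_comm]

lemma L2step (hδ : NF cp φ ψ δhat δbar δ) (hφ1 : φ 1 = 1)
    (hφm : ∀ a b : A, φ (a * b) = φ a * φ b)
    (hφι : ∀ v, φ (cp.ι v) = cp.ι (φhat v))
    (hψm : ∀ a b : A, ψ (a * b) = ψ a * ψ b)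
    (hψι : ∀ v, ψ (cp.ι v) = cp.ι (ψhat v))
    (hψw : ∀ g, ψ (cp.w g) = (cψ g : k) • cp.w g)
    (hφG : GLinear ρV φhat)
    (ha : ∀ (g : G) (v : V),
      (cψ g : k) • (δhat (ρV g v) * cp.w g) + cp.ι (φhat (ρV g v)) * δbar g
        = δbar g * cp.ι (ψhat v) + (cφ g : k) • (cp.w g * δhat v))
    (v : V) (g : G) (a' : A)
    (IH' : δ (cp.w g * a') = δbar g * ψ a' + (cφ g : k) • (cp.w g * δ a')) :
    δ (cp.w g * (cp.ι v * a'))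
      = δbar g * ψ (cp.ι v * a') + (cφ g : k) • (cp.w g * δ (cp.ι v * a')) := by
  have e1 : cp.w g * (cp.ι v * a') = cp.ι (ρV g v) * (cp.w g * a') := by
    rw [← mul_assoc, cp.w_ι, mul_assoc]
  rw [e1, L1 hδ hφ1 hφm hφι, IH', hψm (cp.w g) a', hψw g,
    hψm (cp.ι v) a', hψι v, L1 hδ hφ1 hφm hφι v a']
  have key : ((cψ g : k) • (δhat (ρV g v) * cp.w g)
        + cp.ι (φhat (ρV g v)) * δbar g) * ψ a'
      = (δbar g * cp.ι (ψhat v) + (cφ g : k) • (cp.w g * δhat v)) * ψ a' := by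
    rw [ha g v]
  have hw : cp.w g * (cp.ι (φhat v) * δ a')
      = cp.ι (φhat (ρV g v)) * (cp.w g * δ a') := by
    rw [← mul_assoc, cp.w_ι, ← hφG g v, mul_assoc]
  simp only [smul_mul_assoc, mul_smul_comm, mul_add, smul_add, add_mul, mul_assoc]
    at key ⊢
  rw [hw, ← add_assoc, key, add_assoc]

lemma L2 (hδ : NF cp φ ψ δhat δbar δ) (hφ1 : φ 1 = 1)
    (hφm : ∀ a b : A, φ (a * b) = φ a * φ b)
    (hφι : ∀ v, φ (cp.ι v) = cp.ι (φhat v))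
    (hψm : ∀ a b : A, ψ (a * b) = ψ a * ψ b)
    (hψι : ∀ v, ψ (cp.ι v) = cp.ι (ψhat v))
    (hψw : ∀ g, ψ (cp.w g) = (cψ g : k) • cp.w g)
    (hφG : GLinear ρV φhat)
    (ha : ∀ (g : G) (v : V),
      (cψ g : k) • (δhat (ρV g v) * cp.w g) + cp.ι (φhat (ρV g v)) * δbar g
        = δbar g * cp.ι (ψhat v) + (cφ g : k) • (cp.w g * δhat v))
    (hb : ∀ g h : G,
      (f g h : k) • δbar (g * h)
        = (cψ h : k) • (δbar g * cp.w h) + (cφ g : k) • (cp.w g * δbar h))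
    (g : G) (a : A) :
    δ (cp.w g * a) = δbar g * ψ a + (cφ g : k) • (cp.w g * δ a) := by
  refine span_ind cp
    (p := fun a => δ (cp.w g * a) = δbar g * ψ a + (cφ g : k) • (cp.w g * δ a)) ?_ ?_ ?_ a
  · intro m
    induction m with
    | zero =>
      intro u h
      simp only [List.ofFn_zero, mon_nil, one_mul]
      rw [cp.w_mul, map_smul, dw hδ hφ1, hb g h, hψw, dw hδ hφ1, mul_smul_comm]
    | succ m IH =>
      intro u h
      rw [← Fin.cons_self_tail u, mon_ofFn_cons, mul_assoc]
      exact L2step hδ hφ1 hφm hφι hψm hψι hψw hφG ha (u 0) g _ (IH (Fin.tail u) h)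
  · intro a b pa pb
    simp only [mul_add, map_add, pa, pb, smul_add]
    abel
  · intro c a pa
    simp only [mul_smul_comm, map_smul, pa, smul_add, mul_smul_comm]
    rw [smul_comm]

lemma GenMul (hδ : NF cp φ ψ δhat δbar δ) (hφ1 : φ 1 = 1)
    (hφm : ∀ a b : A, φ (a * b) = φ a * φ b)
    (hψ1 : ψ 1 = 1)
    (hφι : ∀ v, φ (cp.ι v) = cp.ι (φhat v))
    (hψm : ∀ a b : A, ψ (a * b) = ψ a * ψ b)
    (hψι : ∀ v, ψ (cp.ι v) = cp.ι (ψhat v))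
    (hφw : ∀ g, φ (cp.w g) = (cφ g : k) • cp.w g)
    (hψw : ∀ g, ψ (cp.w g) = (cψ g : k) • cp.w g)
    (hφG : GLinear ρV φhat)
    (hb1 : δbar 1 = 0)
    (ha : ∀ (g : G) (v : V),
      (cψ g : k) • (δhat (ρV g v) * cp.w g) + cp.ι (φhat (ρV g v)) * δbar g
        = δbar g * cp.ι (ψhat v) + (cφ g : k) • (cp.w g * δhat v))
    (hb : ∀ g h : G,
      (f g h : k) • δbar (g * h)
        = (cψ h : k) • (δbar g * cp.w h) + (cφ g : k) • (cp.w g * δbar h))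
    (x : A) (hx : x ∈ Submodule.span k (Set.range cp.w) ∨ ∃ v : V, x = cp.ι v)
    (a : A) :
    δ (x * a) = δ x * ψ a + φ x * δ a := by
  rcases hx with hx | ⟨v, rfl⟩
  · induction hx using Submodule.span_induction with
    | mem x hxm =>
      obtain ⟨g, rfl⟩ := hxm
      rw [L2 hδ hφ1 hφm hφι hψm hψι hψw hφG ha hb g a, dw hδ hφ1, hφw g,
        smul_mul_assoc]
    | zero => simp
    | add x y _ _ px py => simp only [add_mul, map_add, px, py]; abel
    | smul c x _ px => simp only [smul_mul_assoc, map_smul, px, smul_add]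
  · rw [L1 hδ hφ1 hφm hφι, dι hδ hφ1 hψ1 hφι hb1, hφι]

lemma Leibniz (hδ : NF cp φ ψ δhat δbar δ) (hφ1 : φ 1 = 1)
    (hφm : ∀ a b : A, φ (a * b) = φ a * φ b)
    (hψ1 : ψ 1 = 1)
    (hφι : ∀ v, φ (cp.ι v) = cp.ι (φhat v))
    (hψm : ∀ a b : A, ψ (a * b) = ψ a * ψ b)
    (hψι : ∀ v, ψ (cp.ι v) = cp.ι (ψhat v))
    (hφw : ∀ g, φ (cp.w g) = (cφ g : k) • cp.w g)
    (hψw : ∀ g, ψ (cp.w g) = (cψ g : k) • cp.w g)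
    (hφG : GLinear ρV φhat)
    (hb1 : δbar 1 = 0)
    (ha : ∀ (g : G) (v : V),
      (cψ g : k) • (δhat (ρV g v) * cp.w g) + cp.ι (φhat (ρV g v)) * δbar g
        = δbar g * cp.ι (ψhat v) + (cφ g : k) • (cp.w g * δhat v))
    (hb : ∀ g h : G,
      (f g h : k) • δbar (g * h)
        = (cψ h : k) • (δbar g * cp.w h) + (cφ g : k) • (cp.w g * δbar h))
    (m : ℕ) (x : Fin m → A)
    (hx : ∀ i, x i ∈ Submodule.span k (Set.range cp.w) ∨ ∃ v : V, x i = cp.ι v) :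
    δ (List.ofFn x).prod
      = ∑ j : Fin m,
          φ ((List.ofFn x).take j).prod * δ (x j) * ψ ((List.ofFn x).drop (j + 1)).prod := by
  induction m with
  | zero =>
    simp only [List.ofFn_zero, List.prod_nil, Finset.univ_eq_empty, Finset.sum_empty]
    have h1 : (1 : A) = cp.mon (List.ofFn (fun i : Fin 0 => i.elim0)) * cp.w 1 := by
      simp [List.ofFn_zero, mon_nil, cp.w_one]
    rw [h1, hδ 0 _ 1]
    simp [hφ1, mon_nil, hb1]
  | succ m IH =>
    rw [List.ofFn_succ, List.prod_cons,
      GenMul hδ hφ1 hφm hψ1 hφι hψm hψι hφw hψw hφG hb1 ha hb (x 0) (hx 0),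
      IH (fun i => x i.succ) (fun i => hx i.succ), Fin.sum_univ_succ]
    congr 1
    · simp [hφ1]
    · rw [Finset.mul_sum]
      refine Finset.sum_congr rfl fun j _ => ?_
      rw [Fin.val_succ, List.take_succ_cons, List.drop_succ_cons,
        List.prod_cons, hφm]
      simp only [mul_assoc]

lemma Fwd (hδ : NF cp φ ψ δhat δbar δ) (hφ1 : φ 1 = 1) (hψ1 : ψ 1 = 1)
    (hφι : ∀ v, φ (cp.ι v) = cp.ι (φhat v))
    (hψι : ∀ v, ψ (cp.ι v) = cp.ι (ψhat v))
    (hφw : ∀ g, φ (cp.w g) = (cφ g : k) • cp.w g)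
    (hψw : ∀ g, ψ (cp.w g) = (cψ g : k) • cp.w g)
    (hL : ∀ (m : ℕ) (x : Fin m → A),
        (∀ i, x i ∈ Submodule.span k (Set.range cp.w) ∨ ∃ v : V, x i = cp.ι v) →
        δ (List.ofFn x).prod
          = ∑ j : Fin m,
              φ ((List.ofFn x).take j).prod * δ (x j) * ψ ((List.ofFn x).drop (j + 1)).prod) :
    (∀ (g : G) (v : V),
        (cψ g : k) • (δhat (ρV g v) * cp.w g) + cp.ι (φhat (ρV g v)) * δbar g
          = δbar g * cp.ι (ψhat v) + (cφ g : k) • (cp.w g * δhat v))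
      ∧ ∀ g h : G,
          (f g h : k) • δbar (g * h)
            = (cψ h : k) • (δbar g * cp.w h) + (cφ g : k) • (cp.w g * δbar h) := by
  have hb1 : δbar 1 = 0 := by
    have h0 := hL 0 (fun i => i.elim0) (fun i => i.elim0)
    simp only [List.ofFn_zero, List.prod_nil, Finset.univ_eq_empty, Finset.sum_empty] at h0
    rw [d1 hδ hφ1] at h0
    exact h0
  constructor
  · intro g v
    have hgen : ∀ i, (![cp.w g, cp.ι v]) i ∈ Submodule.span k (Set.range cp.w)
        ∨ ∃ u : V, (![cp.w g, cp.ι v]) i = cp.ι u := by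
      intro i
      fin_cases i
      · exact Or.inl (Submodule.subset_span ⟨g, rfl⟩)
      · exact Or.inr ⟨v, rfl⟩
    have h2 := hL 2 ![cp.w g, cp.ι v] hgen
    have hprod : (List.ofFn ![cp.w g, cp.ι v]).prod = cp.ι (ρV g v) * cp.w g := by
      simp only [List.ofFn_succ, List.ofFn_zero, Matrix.cons_val_zero, Matrix.cons_val_one,
        Matrix.head_cons, List.prod_cons, List.prod_nil, mul_one]
      exact cp.w_ι g v
    rw [hprod, dmon1 hδ hφ1 hφι, hψw g, Fin.sum_univ_two] at h2
    simp only [Matrix.cons_val_zero, Matrix.cons_val_one, Matrix.head_cons,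
      List.ofFn_succ, List.ofFn_zero, Fin.val_zero, Fin.val_one,
      Fin.succ_zero_eq_one, Matrix.cons_val_succ,
      List.take_zero, List.take_succ_cons, List.drop_succ_cons, List.drop_zero,
      List.take_nil, List.drop_nil, List.prod_cons, List.prod_nil, mul_one,
      hφ1, hψ1, one_mul, hψι, hφw, dw hδ hφ1, dι hδ hφ1 hψ1 hφι hb1,
      smul_mul_assoc, mul_smul_comm] at h2
    exact h2
  · intro g h
    have hgen : ∀ i, (![cp.w g, cp.w h]) i ∈ Submodule.span k (Set.range cp.w)
        ∨ ∃ u : V, (![cp.w g, cp.w h]) i = cp.ι u := by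
      intro i
      fin_cases i
      · exact Or.inl (Submodule.subset_span ⟨g, rfl⟩)
      · exact Or.inl (Submodule.subset_span ⟨h, rfl⟩)
    have h2 := hL 2 ![cp.w g, cp.w h] hgen
    have hprod : (List.ofFn ![cp.w g, cp.w h]).prod = (f g h : k) • cp.w (g * h) := by
      simp only [List.ofFn_succ, List.ofFn_zero, Matrix.cons_val_zero, Matrix.cons_val_one,
        Matrix.head_cons, List.prod_cons, List.prod_nil, mul_one]
      exact cp.w_mul g h
    rw [hprod, map_smul, dw hδ hφ1, Fin.sum_univ_two] at h2
    simp only [Matrix.cons_val_zero, Matrix.cons_val_one, Matrix.head_cons,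
      List.ofFn_succ, List.ofFn_zero, Fin.val_zero, Fin.val_one,
      Fin.succ_zero_eq_one, Matrix.cons_val_succ,
      List.take_zero, List.take_succ_cons, List.drop_succ_cons, List.drop_zero,
      List.take_nil, List.drop_nil, List.prod_cons, List.prod_nil, mul_one,
      hφ1, hψ1, one_mul, hψw, hφw, dw hδ hφ1,
      smul_mul_assoc, mul_smul_comm] at h2
    exact h2

theorem master (hf : IsCocycle G f)
    (hφ1 : φ 1 = 1) (hφm : ∀ a b : A, φ (a * b) = φ a * φ b)
    (hψ1 : ψ 1 = 1) (hψm : ∀ a b : A, ψ (a * b) = ψ a * ψ b)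
    (hφι : ∀ v, φ (cp.ι v) = cp.ι (φhat v))
    (hψι : ∀ v, ψ (cp.ι v) = cp.ι (ψhat v))
    (hφw : ∀ g, φ (cp.w g) = (cφ g : k) • cp.w g)
    (hψw : ∀ g, ψ (cp.w g) = (cψ g : k) • cp.w g)
    (hφG : GLinear ρV φhat)
    (hcφ1 : cφ 1 = 1) (hcψ1 : cψ 1 = 1)
    (hδ : NF cp φ ψ δhat δbar δ) :
    (∀ (m : ℕ) (x : Fin m → A),
        (∀ i, x i ∈ Submodule.span k (Set.range cp.w) ∨ ∃ v : V, x i = cp.ι v) →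
        δ (List.ofFn x).prod
          = ∑ j : Fin m,
              φ ((List.ofFn x).take j).prod * δ (x j) * ψ ((List.ofFn x).drop (j + 1)).prod)
    ↔ ((∀ (g : G) (v : V),
          (cψ g : k) • (δhat (ρV g v) * cp.w g) + cp.ι (φhat (ρV g v)) * δbar g
            = δbar g * cp.ι (ψhat v) + (cφ g : k) • (cp.w g * δhat v))
        ∧ ∀ g h : G,
            (f g h : k) • δbar (g * h)
              = (cψ h : k) • (δbar g * cp.w h) + (cφ g : k) • (cp.w g * δbar h)) := by
  constructor
  · exact fun hL => Fwd hδ hφ1 hψ1 hφι hψι hφw hψw hL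
  · rintro ⟨ha, hb⟩
    have hb1 : δbar 1 = 0 := by
      have h11 := hb 1 1
      rw [mul_one, hf.one_left 1, hcψ1, hcφ1, cp.w_one, mul_one, one_mul] at h11
      simp only [Units.val_one, one_smul] at h11
      exact (left_eq_add.mp h11)
    exact fun m x hx =>
      Leibniz hδ hφ1 hφm hψ1 hφι hψm hψι hφw hψw hφG hb1 ha hb m x hx

end Master

end StTen
end Paper

open Paper in
/-- The Leibniz rule of `δ₁`, `δ₂` on mixed products of elements of
`k#_f G` and `V`, characterised by conditions (a) and (b). -/
theorem statement_10 {k : Type*} [Field k]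
    {G : Type*} [Group G] {V : Type*} [AddCommGroup V] [Module k V] [FiniteDimensional k V]
    (ρV : Representation k G V) (f : G → G → kˣ) (hf : IsCocycle G f)
    {A : Type*} [Ring A] [Algebra k A] (cp : CrossedProduct A ρV f)
    (αhat : V ≃ₗ[k] V) (hαG : GLinear ρV (αhat : V →ₗ[k] V))
    (χα : G → kˣ) (hχα : IsCharacter G χα)
    (α : A ≃ₐ[k] A)
    (hαι : ∀ v : V, α (cp.ι v) = cp.ι (αhat v))
    (hαw : ∀ g : G, α (cp.w g) = (χα g : k) • cp.w g)
    (ςhat : V ≃ₗ[k] V) (hςG : GLinear ρV (ςhat : V →ₗ[k] V))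
    (χς : G → kˣ) (hχς : IsCharacter G χς)
    (ς : Module.End k A) (hςdef : SigmaDef cp (ςhat : V →ₗ[k] V) χς ς)
    (hς1 : ς 1 = 1) (hςmul : ∀ a b : A, ς (a * b) = ς a * ς b)
    (hςbij : Function.Bijective ς)
    (δhat₁ δhat₂ : V →ₗ[k] A) (δbar₁ δbar₂ : G → A)
    (δ₁ δ₂ : Module.End k A)
    (hδ₁ : Delta1Def cp α ς δhat₁ δbar₁ δ₁)
    (hδ₂ : Delta2Def cp α ς δhat₂ δbar₂ δ₂) :
    ((∀ (m : ℕ) (x : Fin m → A),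
        (∀ i, x i ∈ Submodule.span k (Set.range cp.w) ∨ ∃ v : V, x i = cp.ι v) →
        δ₁ (List.ofFn x).prod
          = ∑ j : Fin m,
              α ((List.ofFn x).take j).prod * δ₁ (x j) * ς ((List.ofFn x).drop (j + 1)).prod)
      ↔ ((∀ (g : G) (v : V),
            (χς g : k) • (δhat₁ (ρV g v) * cp.w g) + cp.ι (αhat (ρV g v)) * δbar₁ g
              = δbar₁ g * cp.ι (ςhat v) + (χα g : k) • (cp.w g * δhat₁ v))
          ∧ ∀ g h : G,
              (f g h : k) • δbar₁ (g * h)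
                = (χς h : k) • (δbar₁ g * cp.w h) + (χα g : k) • (cp.w g * δbar₁ h)))
    ∧ ((∀ (m : ℕ) (x : Fin m → A),
        (∀ i, x i ∈ Submodule.span k (Set.range cp.w) ∨ ∃ v : V, x i = cp.ι v) →
        δ₂ (List.ofFn x).prod
          = ∑ j : Fin m,
              ς (α.symm ((List.ofFn x).take j).prod) * δ₂ (x j)
                * ((List.ofFn x).drop (j + 1)).prod)
      ↔ ((∀ (g : G) (v : V),
            δhat₂ (ρV g v) * cp.w g + cp.ι (ςhat (αhat.symm (ρV g v))) * δbar₂ g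
              = δbar₂ g * cp.ι v + ((χς g * (χα g)⁻¹ : kˣ) : k) • (cp.w g * δhat₂ v))
          ∧ ∀ g h : G,
              (f g h : k) • δbar₂ (g * h)
                = δbar₂ g * cp.w h + ((χς g * (χα g)⁻¹ : kˣ) : k) • (cp.w g * δbar₂ h))) := by
  classical
  have hχα1 : χα 1 = 1 := Paper.StTen.char_one hχα
  have hχς1 : χς 1 = 1 := Paper.StTen.char_one hχς
  -- basic facts about ς
  have hςι : ∀ v : V, ς (cp.ι v) = cp.ι (ςhat v) := by
    intro v
    have := hςdef 1 (fun _ => v) 1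
    simpa [List.ofFn_succ, List.ofFn_zero, Paper.StTen.mon_cons, Paper.StTen.mon_nil,
      cp.w_one, hχς1, CrossedProduct.mon] using this
  have hςw : ∀ g : G, ς (cp.w g) = (χς g : k) • cp.w g := by
    intro g
    have := hςdef 0 (fun i => i.elim0) g
    simpa [List.ofFn_zero, Paper.StTen.mon_nil, CrossedProduct.mon] using this
  -- facts about α.symm
  have hαsymmι : ∀ v : V, α.symm (cp.ι v) = cp.ι (αhat.symm v) := by
    intro v
    rw [AlgEquiv.symm_apply_eq, hαι, αhat.apply_symm_apply]
  have hαsymmw : ∀ g : G, α.symm (cp.w g) = (((χα g)⁻¹ : kˣ) : k) • cp.w g := by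
    intro g
    rw [AlgEquiv.symm_apply_eq, map_smul, hαw, smul_smul]
    norm_cast
    rw [inv_mul_cancel]
    simp
  have hαsymmG : ∀ (g : G) (v : V), αhat.symm (ρV g v) = ρV g (αhat.symm v) := by
    intro g v
    have h := hαG g (αhat.symm v)
    simp only [LinearEquiv.coe_coe] at h
    rw [αhat.apply_symm_apply] at h
    rw [LinearEquiv.symm_apply_eq]
    exact h.symm
  constructor
  · -- part 1
    have M := Paper.StTen.master (cp := cp) (φ := α.toLinearMap) (ψ := ς)
      (φhat := (αhat : V →ₗ[k] V)) (ψhat := (ςhat : V →ₗ[k] V))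
      (cφ := χα) (cψ := χς) (δhat := δhat₁) (δbar := δbar₁) (δ := δ₁)
      hf
      (by simp) (by intro a b; simp)
      hς1 hςmul
      (by intro v; simpa using hαι v)
      (by intro v; simpa using hςι v)
      (by intro g; simpa using hαw g)
      hςw hαG hχα1 hχς1
      (by intro m v g; simpa only [AlgEquiv.toLinearMap_apply] using hδ₁ m v g)
    simpa only [AlgEquiv.toLinearMap_apply, LinearEquiv.coe_coe] using M
  · -- part 2
    have M := Paper.StTen.master (cp := cp) (φ := ς ∘ₗ α.symm.toLinearMap)
      (ψ := LinearMap.id)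
      (φhat := (ςhat : V →ₗ[k] V) ∘ₗ (αhat.symm : V →ₗ[k] V))
      (ψhat := LinearMap.id)
      (cφ := fun g => χς g * (χα g)⁻¹) (cψ := fun _ => 1)
      (δhat := δhat₂) (δbar := δbar₂) (δ := δ₂)
      hf
      (by simp [hς1])
      (by intro a b
          simp only [LinearMap.comp_apply, AlgEquiv.toLinearMap_apply, map_mul, hςmul])
      (by simp) (by intro a b; simp)
      (by intro v
          simp only [LinearMap.comp_apply, AlgEquiv.toLinearMap_apply, LinearEquiv.coe_coe]
          rw [hαsymmι, hςι])
      (by intro v; simp)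
      (by intro g
          simp only [LinearMap.comp_apply, AlgEquiv.toLinearMap_apply]
          rw [hαsymmw, map_smul, hςw, smul_smul, Units.val_mul]
          ring_nf)
      (by intro g; simp)
      (by intro g v
          simp only [LinearMap.comp_apply, LinearEquiv.coe_coe]
          rw [hαsymmG]
          simpa using hςG g (αhat.symm v))
      (by show χς 1 * (χα 1)⁻¹ = 1
          rw [hχα1, hχς1]; simp) rfl
      (by intro m v g
          simpa only [LinearMap.comp_apply, AlgEquiv.toLinearMap_apply, LinearMap.id_coe,
            id_eq] using hδ₂ m v g)
    simpa only [LinearMap.comp_apply, AlgEquiv.toLinearMap_apply, LinearMap.id_coe, id_eq,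
      LinearEquiv.coe_coe, Units.val_one, one_smul] using M
end
end

section
/- In the first-case setting (with δ̄_1 = δ̄_2 = 0): (1) the identity δ̂_1(v)ς̂(w) + α̂(v)δ̂_1(w) = δ̂_1(w)ς̂(v) + α̂(w)δ̂_1(v) holds for all v,w ∈ V if and only if ^{g_1}ς̂(v) = α̂(v) for all v ∈ ker δ̂_1; and (2) the identity δ̂_2(v)w + ς̂(α̂^{-1}(v))δ̂_2(w) = δ̂_2(w)v + ς̂(α̂^{-1}(w))δ̂_2(v) holds for all v,w ∈ V if and only if ^{g_2}v = ς̂(α̂^{-1}(v)) for all v ∈ ker δ̂_2. -/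
open TensorProduct

noncomputable section
namespace Paper

variable {k : Type*} [Field k]

section Aux

variable {k : Type*} [Field k]
variable {G : Type*} [Group G] {V : Type*} [AddCommGroup V] [Module k V]
variable {A : Type*} [Ring A] [Algebra k A] {ρV : Representation k G V} {f : G → G → kˣ}

namespace CrossedProduct

variable (cp : CrossedProduct A ρV f)

lemma sv_comm (P : A) (hP : P ∈ cp.SV) (v : V) : P * cp.ι v = cp.ι v * P := by
  have hle : cp.SV ≤ Subalgebra.centralizer k {cp.ι v} := by
    apply Algebra.adjoin_le
    rintro _ ⟨u, rfl⟩ y hy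
    simp only [Set.mem_singleton_iff] at hy
    subst hy
    exact cp.ι_comm v u
  exact (hle hP (cp.ι v) rfl).symm

lemma w_cancel (g : G) {a b : A} (h : a * cp.w g = b * cp.w g) : a = b := by
  have h2 : a * (cp.w g * cp.w g⁻¹) = b * (cp.w g * cp.w g⁻¹) := by
    rw [← mul_assoc, ← mul_assoc, h]
  rw [cp.w_mul, mul_inv_cancel, cp.w_one] at h2
  have h3 : ((f g g⁻¹ : k)) • a = ((f g g⁻¹ : k)) • b := by
    simpa [mul_smul_comm] using h2
  exact smul_right_injective A (Units.ne_zero (f g g⁻¹)) h3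

lemma key_cancel [FiniteDimensional k V] {P : A} (hP : P ∈ cp.SV) (hP0 : P ≠ 0)
    (u : V) (h : P * cp.ι u = 0) : u = 0 := by
  classical
  obtain ⟨bV⟩ : Nonempty (Module.Basis (Fin (Module.finrank k V)) k V) := ⟨Module.finBasis k V⟩
  set n := Module.finrank k V
  obtain ⟨bA, hbA⟩ := cp.isBasis bV
  letI : CommRing cp.SV := { (inferInstance : Ring cp.SV) with
    mul_comm := (Algebra.adjoinCommRingOfComm k (fun a ha b hb => by
      obtain ⟨x, rfl⟩ := ha; obtain ⟨y, rfl⟩ := hb; exact cp.ι_comm x y)).mul_comm }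
  set y : Fin n → cp.SV := fun i => ⟨cp.ι (bV i), Algebra.subset_adjoin ⟨bV i, rfl⟩⟩ with hy
  set φ : MvPolynomial (Fin n) k →ₐ[k] A := cp.SV.val.comp (MvPolynomial.aeval y) with hφ
  have hXi : ∀ i, φ (MvPolynomial.X i) = cp.ι (bV i) := by
    intro i; simp [hφ, hy]
  have hmono : ∀ d : Fin n →₀ ℕ, φ (MvPolynomial.monomial d (1 : k)) = bA (⇑d, 1) := by
    intro d
    have h1 : (MvPolynomial.aeval y) (MvPolynomial.monomial d (1 : k))
        = ∏ i : Fin n, y i ^ d i := by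
      rw [MvPolynomial.aeval_monomial, map_one, one_mul, Finsupp.prod]
      apply Finset.prod_subset (Finset.subset_univ _)
      intro i _ hi
      simp [Finsupp.notMem_support_iff.mp hi]
    have h2 : (∏ i : Fin n, y i ^ d i) = (List.ofFn fun i => y i ^ d i).prod := by
      rw [List.prod_ofFn]
    have h3 : φ (MvPolynomial.monomial d (1 : k))
        = ((List.ofFn fun i => y i ^ d i).map cp.SV.val).prod := by
      rw [hφ]; simp only [AlgHom.coe_comp, Function.comp_apply, h1, h2]
      exact (map_list_prod (cp.SV.val : cp.SV →* A) _)
    rw [h3, List.map_ofFn]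
    have h4 : (⇑cp.SV.val ∘ fun i => y i ^ d i)
        = fun i => cp.ι (bV i) ^ d i := by
      funext i; simp [hy]
    rw [h4, hbA d 1, cp.w_one, mul_one]
  have li : LinearIndependent k (fun d : Fin n →₀ ℕ => bA (⇑d, (1 : G))) := by
    apply bA.linearIndependent.comp (fun d : Fin n →₀ ℕ => ((⇑d, (1 : G)) : (Fin n → ℕ) × G))
    intro a b hab
    exact DFunLike.coe_injective (congrArg Prod.fst hab)
  have φinj : Function.Injective φ := by
    have hker : ∀ p : MvPolynomial (Fin n) k, φ p = 0 → p = 0 := by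
      intro p hp
      set b := MvPolynomial.basisMonomials (Fin n) k with hb
      have hrep : φ (Finsupp.linearCombination k ⇑b (b.repr p)) = 0 := by
        rw [b.linearCombination_repr]; exact hp
      rw [show ⇑φ = ⇑φ.toLinearMap from rfl, Finsupp.apply_linearCombination] at hrep
      have heq : (⇑φ.toLinearMap ∘ ⇑b) = fun d : Fin n →₀ ℕ => bA (⇑d, (1 : G)) := by
        funext d
        simp only [Function.comp_apply, hb, MvPolynomial.coe_basisMonomials,
          AlgHom.toLinearMap_apply]
        exact hmono d
      rw [heq] at hrep
      have hrep0 : b.repr p = 0 := li (by rw [hrep, map_zero])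
      have := congrArg b.repr.symm hrep0
      simpa using this
    intro p q hpq
    have : φ (p - q) = 0 := by rw [map_sub, hpq, sub_self]
    exact sub_eq_zero.mp (hker _ this)
  have hιφ : ∀ z : V, cp.ι z = φ (∑ i, bV.repr z i • MvPolynomial.X i) := by
    intro z
    rw [map_sum]
    simp only [map_smul, hXi]
    calc cp.ι z = cp.ι (∑ i, bV.repr z i • bV i) := by rw [bV.sum_repr]
    _ = ∑ i, bV.repr z i • cp.ι (bV i) := by rw [map_sum]; simp only [map_smul]
  obtain ⟨p, hp⟩ : ∃ p, φ p = P := by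
    have hle : cp.SV ≤ φ.range := by
      apply Algebra.adjoin_le
      rintro _ ⟨z, rfl⟩
      exact ⟨_, (hιφ z).symm⟩
    exact hle hP
  have hmul : φ (p * (∑ i, bV.repr u i • MvPolynomial.X i)) = 0 := by
    rw [map_mul, hp, ← hιφ u]; exact h
  have hpr : p * (∑ i, bV.repr u i • MvPolynomial.X i) = 0 := by
    apply φinj; rw [hmul, map_zero]
  have hpne : p ≠ 0 := fun h0 => hP0 (by rw [← hp, h0, map_zero])
  have hr : (∑ i, bV.repr u i • MvPolynomial.X i) = 0 :=
    (mul_eq_zero.mp hpr).resolve_left hpne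
  have hcoeff : ∀ i, bV.repr u i = 0 :=
    Fintype.linearIndependent_iff.mp (MvPolynomial.linearIndependent_X _ _)
      (fun i => bV.repr u i) hr
  have : bV.repr u = 0 := Finsupp.ext hcoeff
  have := congrArg bV.repr.symm this
  simpa using this

lemma ι_injective [FiniteDimensional k V] : Function.Injective cp.ι := by
  intro a b hab
  have : cp.ι (a - b) = 0 := by rw [map_sub, hab, sub_self]
  have h1 : (1 : A) * cp.ι (a - b) = 0 := by rw [one_mul]; exact this
  have := cp.key_cancel (one_mem _) ?_ _ h1
  · exact sub_eq_zero.mp this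
  · intro h10
    obtain ⟨bA, hbA⟩ := cp.isBasis (Module.finBasis k V)
    have : Nontrivial A := nontrivial_of_ne (bA ((fun _ => 0), 1)) 0 (bA.ne_zero _)
    exact one_ne_zero h10

/-- Core well-definedness lemma, covering both statements. -/
lemma core [FiniteDimensional k V] (β γ : V →ₗ[k] V) (δ : V →ₗ[k] A)
    (x : V) (g : G) (P : A) (hP : P ∈ cp.SV) (hδx : δ x = P * cp.w g)
    (hx : x ∉ LinearMap.ker δ)
    (hcodim : ∀ v : V, ∃ c : k, v - c • x ∈ LinearMap.ker δ) :
    (∀ v w : V, δ v * cp.ι (β w) + cp.ι (γ v) * δ w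
        = δ w * cp.ι (β v) + cp.ι (γ w) * δ v)
      ↔ ∀ v ∈ LinearMap.ker δ, ρV g (β v) = γ v := by
  have hP0 : P ≠ 0 := by
    intro h0
    exact hx (by simp [LinearMap.mem_ker, hδx, h0])
  constructor
  · intro hid v hv
    have hv0 : δ v = 0 := hv
    have h1 := hid x v
    rw [hv0, mul_zero, add_zero, zero_mul, zero_add, hδx] at h1
    -- h1 : P * cp.w g * cp.ι (β v) = cp.ι (γ v) * (P * cp.w g)
    rw [mul_assoc, cp.w_ι, ← mul_assoc] at h1
    rw [← mul_assoc, ← cp.sv_comm P hP (γ v)] at h1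
    have h2 : P * cp.ι (ρV g (β v)) = P * cp.ι (γ v) := cp.w_cancel g h1
    have h3 : P * cp.ι (ρV g (β v) - γ v) = 0 := by
      rw [map_sub, mul_sub, h2, sub_self]
    have := cp.key_cancel hP hP0 _ h3
    exact sub_eq_zero.mp this
  · intro hh v w
    obtain ⟨c, hc⟩ := hcodim v
    obtain ⟨d, hd⟩ := hcodim w
    have hδ : ∀ (z : V) (e : k), z - e • x ∈ LinearMap.ker δ → δ z = e • (P * cp.w g) := by
      intro z e hz
      have : δ (z - e • x) = 0 := hz
      rw [map_sub, map_smul, sub_eq_zero] at this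
      rw [this, hδx]
    -- key claim
    have hF : ∀ (z : V) (e : k), z - e • x ∈ LinearMap.ker δ →
        (P * cp.w g) * cp.ι (β z)
          = cp.ι (γ z) * (P * cp.w g)
            + e • (P * cp.ι (ρV g (β x) - γ x) * cp.w g) := by
      intro z e hz
      have hzker := hh _ hz
      have e1 : P * cp.w g * cp.ι (β z) = P * cp.ι (ρV g (β z)) * cp.w g := by
        rw [mul_assoc, cp.w_ι, ← mul_assoc]
      have e2 : ρV g (β z) = γ (z - e • x) + e • ρV g (β x) := by
        calc ρV g (β z) = ρV g (β ((z - e • x) + e • x)) := by rw [sub_add_cancel]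
        _ = ρV g (β (z - e • x)) + e • ρV g (β x) := by
            rw [map_add, map_smul, map_add, map_smul]
        _ = _ := by rw [hzker]
      have e3 : γ z = γ ((z - e • x) + e • x) := by rw [sub_add_cancel]
      have e4 : ∀ u : V, cp.ι u * (P * cp.w g) = P * cp.ι u * cp.w g := fun u => by
        rw [← mul_assoc, ← cp.sv_comm P hP u]
      rw [e1, e2, e3, map_add, map_smul, e4]
      simp only [map_add, map_smul, map_sub, mul_add, add_mul, mul_sub, sub_mul,
        smul_add, smul_sub, mul_smul_comm, smul_mul_assoc]
      abel
    have hv' := hF v c hc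
    have hw' := hF w d hd
    rw [hδ v c hc, hδ w d hd]
    rw [smul_mul_assoc, smul_mul_assoc, mul_smul_comm, mul_smul_comm]
    rw [hv', hw']
    rw [smul_add, smul_add]
    rw [smul_comm c d]
    abel

end CrossedProduct

end Aux

end Paper

open Paper in
/-- Well-definedness conditions in the first case (`δ̄₁ = δ̄₂ = 0`,
`δ̂ᵢ(xᵢ) = Pᵢ w_{gᵢ}` and codimension-one kernels). -/
theorem statement_12 {k : Type*} [Field k] {q : k} (hq0 : q ≠ 0)
    {G : Type*} [Group G] {V : Type*} [AddCommGroup V] [Module k V] [FiniteDimensional k V]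
    (ρV : Representation k G V) (f : G → G → kˣ) (hf : IsCocycle G f)
    {A : Type*} [Ring A] [Algebra k A] (cp : CrossedProduct A ρV f)
    (αhat : V ≃ₗ[k] V) (hαG : GLinear ρV (αhat : V →ₗ[k] V))
    (ςhat : V →ₗ[k] V)
    (δhat₁ δhat₂ : V →ₗ[k] A)
    (x₁ x₂ : V) (g₁ g₂ : G) (P₁ P₂ : A)
    (hP₁ : P₁ ∈ cp.SV) (hP₂ : P₂ ∈ cp.SV)
    (hδx₁ : δhat₁ x₁ = P₁ * cp.w g₁) (hδx₂ : δhat₂ x₂ = P₂ * cp.w g₂)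
    (hx₁ : x₁ ∉ LinearMap.ker δhat₁) (hx₂ : x₂ ∉ LinearMap.ker δhat₂)
    (hcodim₁ : ∀ v : V, ∃ c : k, v - c • x₁ ∈ LinearMap.ker δhat₁)
    (hcodim₂ : ∀ v : V, ∃ c : k, v - c • x₂ ∈ LinearMap.ker δhat₂)
    (hker : LinearMap.ker δhat₁ ≠ LinearMap.ker δhat₂)
    (hx₁₂ : x₁ ∈ LinearMap.ker δhat₂) (hx₂₁ : x₂ ∈ LinearMap.ker δhat₁) :
    ((∀ v w : V,
        δhat₁ v * cp.ι (ςhat w) + cp.ι (αhat v) * δhat₁ w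
          = δhat₁ w * cp.ι (ςhat v) + cp.ι (αhat w) * δhat₁ v)
      ↔ ∀ v ∈ LinearMap.ker δhat₁, ρV g₁ (ςhat v) = αhat v)
    ∧ ((∀ v w : V,
        δhat₂ v * cp.ι w + cp.ι (ςhat (αhat.symm v)) * δhat₂ w
          = δhat₂ w * cp.ι v + cp.ι (ςhat (αhat.symm w)) * δhat₂ v)
      ↔ ∀ v ∈ LinearMap.ker δhat₂, ρV g₂ v = ςhat (αhat.symm v)) := by
  constructor
  · exact cp.core ςhat αhat.toLinearMap δhat₁ x₁ g₁ P₁ hP₁ hδx₁ hx₁ hcodim₁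
  · exact cp.core LinearMap.id (ςhat ∘ₗ αhat.symm.toLinearMap) δhat₂ x₂ g₂ P₂ hP₂ hδx₂ hx₂
      hcodim₂
end
end
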